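/- arXiv:2312.11203 — 13 statements merged into one kernel-verified Lean document; each statement's English description precedes it below -/
import Mathlib

section
/- Let A be a C*-algebra, let p and q be projections in A (self-adjoint idempotents), and suppose there is an element v ∈ A such that ‖v p v* − q‖ < 1. Then q is Murray–von Neumann equivalent to a subprojection of p; that is, there exists w ∈ A with w w* = q and w* w ≤ p. -/
open Unitization in
/-- Conjugation by a self-adjoint symmetry commutes with `cfc`. -/
lemma conj_cfc_comm {U : Type*} [CStarAlgebra U] (S a : U)
    (hS1 : S * S = 1) (hSstar : star S = S) (hSa : S * a = a * S)
    (ha : IsSelfAdjoint a) (f : ℝ → ℝ) (hf : ContinuousOn f (spectrum ℝ a)) :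
    S * cfc f a = cfc f a * S := by
  have hmul : ∀ x y : U, S * (x * y) * S = (S * x * S) * (S * y * S) := by
    intro x y
    have h : S * (S * (y * S)) = y * S := by rw [← mul_assoc, hS1, one_mul]
    simp only [mul_assoc, h]
  let φ : U →⋆ₐ[ℂ] U :=
  { toFun := fun x => S * x * S
    map_one' := by show S * 1 * S = 1; rw [mul_one, hS1]
    map_mul' := fun x y => hmul x y
    map_zero' := by simp
    map_add' := fun x y => by simp [mul_add, add_mul]
    commutes' := fun r => by
      simp [Algebra.algebraMap_eq_smul_one, mul_smul_comm, smul_mul_assoc, hS1]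
    map_star' := fun x => by simp [star_mul, hSstar, mul_assoc] }
  have hφa : φ a = a := by
    show S * a * S = a
    rw [hSa, mul_assoc, hS1, mul_one]
  have hcont : Continuous φ := by
    show Continuous fun x : U => S * x * S
    exact (continuous_const.mul continuous_id).mul continuous_const
  have h := StarAlgHomClass.map_cfc φ f a hf hcont ha (by rw [hφa]; exact ha)
  rw [hφa] at h
  replace h : S * cfc f a * S = cfc f a := h
  calc S * cfc f a = (S * cfc f a * S) * S := by rw [mul_assoc _ S S, hS1, mul_one]
  _ = cfc f a * S := by rw [h]

/-- If `A` is a C*-algebra, `p` and `q` are projections in `A`, and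
`v ∈ A` satisfies `‖v p v* − q‖ < 1`, then `q` is Murray–von Neumann equivalent to a
subprojection of `p`: there is `w` with `w w* = q` and `w* w ≤ p`. -/
theorem stmt_0 {A : Type*} [NonUnitalCStarAlgebra A] [PartialOrder A] [StarOrderedRing A]
    (p q : A) (hp_sa : star p = p) (hp_idem : p * p = p)
    (hq_sa : star q = q) (hq_idem : q * q = q)
    (v : A) (hv : ‖v * p * star v - q‖ < 1) :
    ∃ w : A, w * star w = q ∧ star w * w ≤ p := by
  -- Work in the unitization
  let P : Unitization ℂ A := p
  let Q : Unitization ℂ A := q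
  let V : Unitization ℂ A := v
  have hP_sa : star P = P := by rw [show P = (p : Unitization ℂ A) from rfl, ← Unitization.inr_star, hp_sa]
  have hP2 : P * P = P := by rw [show P = (p : Unitization ℂ A) from rfl, ← Unitization.inr_mul, hp_idem]
  have hQ_sa : star Q = Q := by rw [show Q = (q : Unitization ℂ A) from rfl, ← Unitization.inr_star, hq_sa]
  have hQ2 : Q * Q = Q := by rw [show Q = (q : Unitization ℂ A) from rfl, ← Unitization.inr_mul, hq_idem]
  have hQnorm : ‖Q‖ ≤ 1 := by
    have h1 : ‖Q‖ * ‖Q‖ = ‖Q‖ := by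
      rw [← CStarRing.norm_star_mul_self (x := Q), hQ_sa, hQ2]
    nlinarith [norm_nonneg Q]
  set s : Unitization ℂ A := Q * V * P with hs_def
  set B : Unitization ℂ A := Q * (V * P * star V) * Q with hB_def
  have hBs : B = s * star s := by
    rw [hB_def, hs_def]
    simp only [star_mul, hP_sa, hQ_sa, mul_assoc]
    rw [← mul_assoc P P, hP2]
  have hQB : Q * B = B := by rw [hB_def, ← mul_assoc, ← mul_assoc, hQ2]
  have hBQ : B * Q = B := by rw [hB_def, mul_assoc _ Q Q, hQ2]
  have hBQdiff : B - Q = Q * (V * P * star V - Q) * Q := by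
    simp only [mul_sub, sub_mul, hQ2, hB_def]
  have hVPV : V * P * star V - Q = ((v * p * star v - q : A) : Unitization ℂ A) := by
    push_cast [Unitization.inr_sub, Unitization.inr_mul, Unitization.inr_star]
    rfl
  have hBQnorm : ‖B - Q‖ < 1 := by
    rw [hBQdiff]
    calc ‖Q * (V * P * star V - Q) * Q‖ ≤ ‖Q * (V * P * star V - Q)‖ * ‖Q‖ := norm_mul_le _ _
    _ ≤ ‖Q‖ * ‖V * P * star V - Q‖ * ‖Q‖ := by
        gcongr
        exact norm_mul_le _ _
    _ ≤ 1 * ‖V * P * star V - Q‖ * 1 := by gcongr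
    _ = ‖V * P * star V - Q‖ := by ring
    _ < 1 := by rw [hVPV, Unitization.norm_inr]; exact hv
  set T : Unitization ℂ A := B + 1 - Q with hT_def
  have hT1 : ‖T - 1‖ < 1 := by
    have : T - 1 = B - Q := by rw [hT_def]; abel
    rw [this]; exact hBQnorm
  have hB_sa : star B = B := by
    rw [hBs]; simp [star_mul]
  have hT_sa : IsSelfAdjoint T := by
    show star T = T
    rw [hT_def]
    simp [star_sub, star_add, hB_sa, hQ_sa]
  have hQT : Q * T = T * Q := by
    have h1 : Q * T = B := by
      rw [hT_def, mul_sub, mul_add, hQB, mul_one, hQ2]; abel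
    have h2 : T * Q = B := by
      rw [hT_def, sub_mul, add_mul, hBQ, one_mul, hQ2]; abel
    rw [h1, h2]
  -- spectrum of T is bounded below by 1 - ‖T - 1‖ > 0
  have hspec : ∀ x ∈ spectrum ℝ T, 1 - ‖T - 1‖ ≤ x := by
    intro x hx
    have hx' : x - 1 ∈ spectrum ℝ (T - algebraMap ℝ (Unitization ℂ A) 1) := by
      rw [← spectrum.sub_singleton_eq]
      exact Set.sub_mem_sub hx rfl
    rw [map_one] at hx'
    have hle := spectrum.norm_le_norm_of_mem hx'
    rw [Real.norm_eq_abs] at hle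
    have := (abs_le.mp hle).1
    linarith
  have hpos : ∀ x ∈ spectrum ℝ T, 0 < x := fun x hx => by
    have := hspec x hx; linarith
  set f : ℝ → ℝ := fun x => (Real.sqrt x)⁻¹ with hf_def
  have hfc : ContinuousOn f (spectrum ℝ T) :=
    ContinuousOn.inv₀ Real.continuous_sqrt.continuousOn
      (fun x hx => ne_of_gt (Real.sqrt_pos.mpr (hpos x hx)))
  set d : Unitization ℂ A := cfc f T with hd_def
  have hd_sa : IsSelfAdjoint d := cfc_predicate f T
  have hdT : d * T = T * d := by
    have h := cfc_commute_cfc f id T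
    rwa [cfc_id ℝ T] at h
  have hddT : d * d * T = 1 := by
    have key : cfc (fun x : ℝ => f x * f x * x) T = 1 := by
      rw [cfc_congr (g := fun _ => (1:ℝ)) (fun x hx => by
        have hx0 := hpos x hx
        show f x * f x * x = 1
        simp only [hf_def]
        rw [← mul_inv, Real.mul_self_sqrt hx0.le, inv_mul_cancel₀ (ne_of_gt hx0)])]
      rw [cfc_const 1 T hT_sa, map_one]
    have expand : cfc (fun x : ℝ => f x * f x * x) T = (cfc f T * cfc f T) * T := by
      rw [cfc_mul (fun x => f x * f x) (fun x => x) T (hfc.mul hfc) (by fun_prop),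
        cfc_mul f f T hfc hfc, cfc_id' ℝ T]
    rw [hd_def, ← expand, key]
  -- commutation of d with Q via the symmetry 1 - 2Q
  have hQd : Q * d = d * Q := by
    set S : Unitization ℂ A := 1 - (Q + Q) with hS_def
    have hS1 : S * S = 1 := by
      rw [hS_def]
      simp only [mul_sub, sub_mul, mul_add, add_mul, mul_one, one_mul, hQ2]
      abel
    have hSstar : star S = S := by rw [hS_def]; simp [star_sub, star_add, hQ_sa]
    have hST : S * T = T * S := by
      rw [hS_def]
      simp only [sub_mul, mul_sub, add_mul, mul_add, one_mul, mul_one, hQT]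
    have h := conj_cfc_comm S T hS1 hSstar hST hT_sa f hfc
    rw [← hd_def] at h
    rw [hS_def] at h
    simp only [sub_mul, mul_sub, add_mul, mul_add, one_mul, mul_one] at h
    have h2 : Q * d + Q * d = d * Q + d * Q := sub_right_injective h
    have h3 : (2 : ℂ) • (Q * d) = (2 : ℂ) • (d * Q) := by
      rw [two_smul, two_smul]; exact h2
    exact smul_right_injective _ (two_ne_zero) h3
  -- construction of the partial isometry
  have hTQ : T * Q = B := by
    rw [hT_def, sub_mul, add_mul, hBQ, one_mul, hQ2]; abel
  set wU : Unitization ℂ A := d * s with hwU_def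
  have hsP : s * P = s := by rw [hs_def, mul_assoc, hP2]
  have hQs : Q * s = s := by rw [hs_def, ← mul_assoc, ← mul_assoc, hQ2]
  have hQwU : Q * wU = wU := by rw [hwU_def, ← mul_assoc, hQd, mul_assoc, hQs]
  have hwwstar : wU * star wU = Q := by
    have hstar : star wU = star s * d := by rw [hwU_def, star_mul, hd_sa.star_eq]
    rw [hstar, hwU_def]
    calc d * s * (star s * d) = d * (s * star s) * d := by simp only [mul_assoc]
    _ = d * (T * Q) * d := by rw [← hBs, hTQ]
    _ = d * T * (Q * d) := by simp only [mul_assoc]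
    _ = d * T * (d * Q) := by rw [hQd]
    _ = (d * (T * d)) * Q := by simp only [mul_assoc]
    _ = (d * (d * T)) * Q := by rw [hdT]
    _ = (d * d * T) * Q := by simp only [mul_assoc]
    _ = Q := by rw [hddT, one_mul]
  have hE2 : (star wU * wU) * (star wU * wU) = star wU * wU := by
    calc (star wU * wU) * (star wU * wU) = star wU * (wU * star wU) * wU := by
          simp only [mul_assoc]
    _ = star wU * Q * wU := by rw [hwwstar]
    _ = star wU * wU := by rw [mul_assoc, hQwU]
  have hwUP : wU * P = wU := by rw [hwU_def, mul_assoc, hsP]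
  have hEP : (star wU * wU) * P = star wU * wU := by rw [mul_assoc, hwUP]
  have hE_sa : star (star wU * wU) = star wU * wU := by simp [star_mul]
  have hPE : P * (star wU * wU) = star wU * wU := by
    have h := congrArg star hEP
    rwa [star_mul, hE_sa, hP_sa] at h
  -- descend to A
  set w₀ : A := (d.fst) • (q * v * p) + (d.snd) * (q * v * p)
    with hw₀_def
  have hs_inr : s = ((q * v * p : A) : Unitization ℂ A) := by
    rw [hs_def, Unitization.inr_mul, Unitization.inr_mul]
  have hw : ((w₀ : A) : Unitization ℂ A) = wU := by
    refine Unitization.ext ?_ ?_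
    · rw [Unitization.fst_inr, hwU_def, Unitization.fst_mul, hs_inr, Unitization.fst_inr,
        mul_zero]
    · rw [Unitization.snd_inr, hwU_def, Unitization.snd_mul, hs_inr, Unitization.fst_inr,
        Unitization.snd_inr, hw₀_def, zero_smul, add_zero]
  refine ⟨w₀, ?_, ?_⟩
  · apply Unitization.inr_injective (R := ℂ)
    rw [Unitization.inr_mul, Unitization.inr_star, hw]
    exact hwwstar
  · set e : A := star w₀ * w₀ with he_def
    have hinr_e : ((e : A) : Unitization ℂ A) = star wU * wU := by
      rw [he_def, Unitization.inr_mul, Unitization.inr_star, hw]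
    have hee : e * e = e := by
      apply Unitization.inr_injective (R := ℂ)
      rw [Unitization.inr_mul, hinr_e]
      exact hE2
    have hpe : p * e = e := by
      apply Unitization.inr_injective (R := ℂ)
      rw [Unitization.inr_mul, hinr_e]
      exact hPE
    have hep : e * p = e := by
      apply Unitization.inr_injective (R := ℂ)
      rw [Unitization.inr_mul, hinr_e]
      exact hEP
    have he_sa : star e = e := by rw [he_def]; simp [star_mul]
    have hc : (p - e) * (p - e) = p - e := by
      rw [sub_mul, mul_sub, mul_sub, hp_idem, hpe, hep, hee]; abel
    have hc_sa : star (p - e) = p - e := by rw [star_sub, hp_sa, he_sa]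
    rw [StarOrderedRing.le_iff]
    refine ⟨star (p - e) * (p - e), AddSubmonoid.subset_closure ⟨p - e, rfl⟩, ?_⟩
    rw [hc_sa, hc]
    abel
end

section
/- In the setting of CTXA: for each n ≥ 0 define δ_{n+1} : ℤ × ℤ → ℤ × ℤ by δ_{n+1}(m_1, m_2) = ((l(n+1) − c(n+1)) m_1 + c(n+1) m_2, c(n+1) m_1 + (l(n+1) − c(n+1)) m_2). Then γ_{n+1} ∘ δ_{n+1} = γ_n for every n ≥ 0, and each map γ_n is injective. -/
/-- setting CTXA: with
`γ_n(m₁, m₂) = ((m₁ + m₂)/(2 r(n)), (m₁ − m₂)/(2 r'(n)))` and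
`δ_{n+1}(m₁, m₂) = ((l(n+1) − c(n+1)) m₁ + c(n+1) m₂, c(n+1) m₁ + (l(n+1) − c(n+1)) m₂)`,
one has `γ_{n+1} ∘ δ_{n+1} = γ_n`, and each `γ_n` is injective. -/
theorem stmt_4 (l c : ℕ → ℕ) (hc : ∀ n, 1 ≤ n → 1 ≤ c n)
    (hl : ∀ n, 1 ≤ n → 2 * c n + 1 ≤ l n)
    (r r' : ℕ → ℕ)
    (hr : ∀ n, r n = ∏ k ∈ Finset.Icc 1 n, l k)
    (hr' : ∀ n, r' n = ∏ k ∈ Finset.Icc 1 n, (l k - 2 * c k))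
    (γ : ℕ → ℤ × ℤ → ℚ × ℚ)
    (hγ : ∀ n M, γ n M = (((M.1 : ℚ) + (M.2 : ℚ)) / (2 * (r n : ℚ)),
                          ((M.1 : ℚ) - (M.2 : ℚ)) / (2 * (r' n : ℚ))))
    (δ : ℕ → ℤ × ℤ → ℤ × ℤ)
    (hδ : ∀ n M, δ n M = (((l n : ℤ) - (c n : ℤ)) * M.1 + (c n : ℤ) * M.2,
                          (c n : ℤ) * M.1 + ((l n : ℤ) - (c n : ℤ)) * M.2)) :
    ∀ n, (γ (n + 1)) ∘ (δ (n + 1)) = γ n ∧ Function.Injective (γ n) := by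
  have hrpos : ∀ m, 0 < r m := by
    intro m
    rw [hr]
    apply Finset.prod_pos
    intro k hk
    have := hl k (Finset.mem_Icc.mp hk).1
    omega
  have hr'pos : ∀ m, 0 < r' m := by
    intro m
    rw [hr']
    apply Finset.prod_pos
    intro k hk
    have := hl k (Finset.mem_Icc.mp hk).1
    omega
  intro n
  have hlc : 2 * c (n + 1) + 1 ≤ l (n + 1) := hl (n + 1) (by omega)
  -- recursion for r and r'
  have hrrec : (r (n + 1) : ℚ) = (r n : ℚ) * (l (n + 1) : ℚ) := by
    rw [hr, hr, Finset.prod_Icc_succ_top (by omega : 1 ≤ n + 1)]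
    push_cast
    ring
  have hr'rec : (r' (n + 1) : ℚ) = (r' n : ℚ) * ((l (n + 1) : ℚ) - 2 * (c (n + 1) : ℚ)) := by
    rw [hr', hr', Finset.prod_Icc_succ_top (by omega : 1 ≤ n + 1)]
    have hsub : ((l (n + 1) - 2 * c (n + 1) : ℕ) : ℚ)
        = (l (n + 1) : ℚ) - 2 * (c (n + 1) : ℚ) := by
      have : 2 * c (n + 1) ≤ l (n + 1) := by omega
      push_cast [this]
      ring
    push_cast [hsub]
    ring
  have hrne : (r n : ℚ) ≠ 0 := by exact_mod_cast (hrpos n).ne'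
  have hr'ne : (r' n : ℚ) ≠ 0 := by exact_mod_cast (hr'pos n).ne'
  have hlne : (l (n + 1) : ℚ) ≠ 0 := by
    have : 0 < l (n + 1) := by omega
    exact_mod_cast this.ne'
  have hl2cne : (l (n + 1) : ℚ) - 2 * (c (n + 1) : ℚ) ≠ 0 := by
    have h1 : (1 : ℚ) ≤ (l (n + 1) : ℚ) - 2 * (c (n + 1) : ℚ) := by
      have : (2 * c (n + 1) + 1 : ℚ) ≤ (l (n + 1) : ℚ) := by exact_mod_cast hlc
      linarith
    linarith
  constructor
  · funext M
    simp only [Function.comp_apply, hγ, hδ]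
    rw [hrrec, hr'rec]
    have hl2cne' : (l (n + 1) : ℚ) - (c (n + 1) : ℚ) * 2 ≠ 0 := by rwa [mul_comm] at hl2cne
    refine Prod.ext ?_ ?_ <;>
    · simp only
      push_cast
      field_simp
      ring
  · intro M N h
    rw [hγ, hγ] at h
    have h1 := congrArg Prod.fst h
    have h2 := congrArg Prod.snd h
    simp only at h1 h2
    have e1 : (M.1 : ℚ) + (M.2 : ℚ) = (N.1 : ℚ) + (N.2 : ℚ) := by
      field_simp at h1
      linarith
    have e2 : (M.1 : ℚ) - (M.2 : ℚ) = (N.1 : ℚ) - (N.2 : ℚ) := by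
      field_simp at h2
      linarith
    have f1 : (M.1 : ℚ) = (N.1 : ℚ) := by linarith
    have f2 : (M.2 : ℚ) = (N.2 : ℚ) := by linarith
    exact Prod.ext (by exact_mod_cast f1) (by exact_mod_cast f2)
end

section
/- In the setting of CTXA, assume additionally that for every positive integer k there exist n, n' ∈ ℤ_{>0} such that k divides r(n) and k divides r'(n'). Then for every (x, y) ∈ ℚ × ℚ there exist n ≥ 0 and m_1, m_2 ∈ ℤ such that γ_n(m_1, m_2) = (x, y); that is, the union over n of the images of the maps γ_n is all of ℚ × ℚ. -/
/-- setting CTXA: if every positive integer divides some `r(n)` and some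
`r'(n')`, then every element of `ℚ × ℚ` lies in the image of some `γ_n`. -/
theorem stmt_5 (l c : ℕ → ℕ) (hc : ∀ n, 1 ≤ n → 1 ≤ c n)
    (hl : ∀ n, 1 ≤ n → 2 * c n + 1 ≤ l n)
    (r r' : ℕ → ℕ)
    (hr : ∀ n, r n = ∏ k ∈ Finset.Icc 1 n, l k)
    (hr' : ∀ n, r' n = ∏ k ∈ Finset.Icc 1 n, (l k - 2 * c k))
    (γ : ℕ → ℤ × ℤ → ℚ × ℚ)
    (hγ : ∀ n M, γ n M = (((M.1 : ℚ) + (M.2 : ℚ)) / (2 * (r n : ℚ)),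
                          ((M.1 : ℚ) - (M.2 : ℚ)) / (2 * (r' n : ℚ))))
    (hdiv : ∀ k : ℕ, 0 < k → ∃ n n' : ℕ, 0 < n ∧ 0 < n' ∧ k ∣ r n ∧ k ∣ r' n') :
    ∀ x y : ℚ, ∃ (n : ℕ) (m₁ m₂ : ℤ), γ n (m₁, m₂) = (x, y) := by
  intro x y
  obtain ⟨n, n', hn, hn', h1, h2⟩ := hdiv (2 * x.den * y.den)
    (by have := x.den_pos; have := y.den_pos; positivity)
  set N := max n n' with hN
  have hrd : r n ∣ r N := by
    rw [hr, hr]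
    exact Finset.prod_dvd_prod_of_subset _ _ _
      (Finset.Icc_subset_Icc_right (le_max_left _ _))
  have hrd' : r' n' ∣ r' N := by
    rw [hr', hr']
    exact Finset.prod_dvd_prod_of_subset _ _ _
      (Finset.Icc_subset_Icc_right (le_max_right _ _))
  obtain ⟨t, ht⟩ := h1.trans hrd
  obtain ⟨t', ht'⟩ := h2.trans hrd'
  have hrpos : 0 < r N := by
    rw [hr]
    apply Finset.prod_pos
    intro k hk
    have := hl k (Finset.mem_Icc.mp hk).1
    omega
  have hr'pos : 0 < r' N := by
    rw [hr']
    apply Finset.prod_pos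
    intro k hk
    have := hl k (Finset.mem_Icc.mp hk).1
    have := hc k (Finset.mem_Icc.mp hk).1
    omega
  have htpos : 0 < t := by
    rcases Nat.eq_zero_or_pos t with h | h
    · subst h; rw [Nat.mul_zero] at ht; omega
    · exact h
  have ht'pos : 0 < t' := by
    rcases Nat.eq_zero_or_pos t' with h | h
    · subst h; rw [Nat.mul_zero] at ht'; omega
    · exact h
  set p : ℤ := x.num * (2 * y.den * t) with hp
  set q : ℤ := y.num * (2 * x.den * t') with hq
  refine ⟨N, p + q, p - q, ?_⟩
  rw [hγ, Prod.mk.injEq]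
  have hD : (x.den : ℚ) ≠ 0 := by exact_mod_cast x.den_pos.ne'
  have hE : (y.den : ℚ) ≠ 0 := by exact_mod_cast y.den_pos.ne'
  have hT : (t : ℚ) ≠ 0 := by exact_mod_cast htpos.ne'
  have hT' : (t' : ℚ) ≠ 0 := by exact_mod_cast ht'pos.ne'
  have hrq : (r N : ℚ) = 2 * x.den * y.den * t := by exact_mod_cast ht
  have hr'q : (r' N : ℚ) = 2 * x.den * y.den * t' := by exact_mod_cast ht'
  have hx : (x.num : ℚ) = x * x.den := ((div_eq_iff hD).mp (Rat.num_div_den x)).symm ▸ rfl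
  have hy : (y.num : ℚ) = y * y.den := ((div_eq_iff hE).mp (Rat.num_div_den y)).symm ▸ rfl
  constructor
  · simp only [hrq, hp, hq]
    push_cast
    field_simp
    rw [hx]
    ring
  · simp only [hr'q, hp, hq]
    push_cast
    field_simp
    rw [hy]
    ring
end

section
/- In the setting of CTXA: the partial products π_n = ∏_{k=1}^{n} (1 − 2c(k)/l(k)) form a strictly decreasing sequence in (0, 1]; let λ = lim_{n→∞} π_n. If n ≥ 0 and m_1, m_2 are nonnegative integers, then the pair (x, y) = γ_n(m_1, m_2) satisfies: either (x, y) = (0, 0) (which happens exactly when m_1 = m_2 = 0), or x > λ|y|. -/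
open Filter

/-- setting CTXA: the partial products `π_N = ∏_{k=1}^N (1 − 2c(k)/l(k))`
form a strictly decreasing sequence in `(0, 1]` with limit `λ`, and for nonnegative
integers `m₁, m₂`, the pair `(x, y) = γ_n(m₁, m₂)` is either `(0,0)` (exactly when
`m₁ = m₂ = 0`) or satisfies `x > λ|y|`. -/
theorem stmt_6 (l c : ℕ → ℕ) (hc : ∀ n, 1 ≤ n → 1 ≤ c n)
    (hl : ∀ n, 1 ≤ n → 2 * c n + 1 ≤ l n)
    (r r' : ℕ → ℕ)
    (hr : ∀ n, r n = ∏ k ∈ Finset.Icc 1 n, l k)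
    (hr' : ∀ n, r' n = ∏ k ∈ Finset.Icc 1 n, (l k - 2 * c k))
    (γ : ℕ → ℤ × ℤ → ℚ × ℚ)
    (hγ : ∀ n M, γ n M = (((M.1 : ℚ) + (M.2 : ℚ)) / (2 * (r n : ℚ)),
                          ((M.1 : ℚ) - (M.2 : ℚ)) / (2 * (r' n : ℚ))))
    (π : ℕ → ℝ)
    (hπ : ∀ n, π n = ∏ k ∈ Finset.Icc 1 n, (1 - 2 * (c k : ℝ) / (l k : ℝ)))
    (lam : ℝ) (hlam : Tendsto π atTop (nhds lam)) :
    StrictAnti π ∧ (∀ n, π n ∈ Set.Ioc (0 : ℝ) 1) ∧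
      ∀ (n : ℕ) (m₁ m₂ : ℤ), 0 ≤ m₁ → 0 ≤ m₂ →
        ((γ n (m₁, m₂) = (0, 0) ↔ m₁ = 0 ∧ m₂ = 0) ∧
          (γ n (m₁, m₂) ≠ (0, 0) →
            ((γ n (m₁, m₂)).1 : ℝ) > lam * |((γ n (m₁, m₂)).2 : ℝ)|)) := by
  have hl0 : ∀ k, 1 ≤ k → (0:ℝ) < l k := by
    intro k hk
    have := hl k hk
    exact_mod_cast Nat.cast_pos.mpr (by omega)
  have hfac_pos : ∀ k, 1 ≤ k → (0:ℝ) < 1 - 2 * (c k : ℝ) / (l k : ℝ) := by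
    intro k hk
    have h1 := hl0 k hk
    have h2 : (2 * c k + 1 : ℝ) ≤ l k := by exact_mod_cast hl k hk
    rw [sub_pos, div_lt_one h1]
    linarith
  have hfac_lt : ∀ k, 1 ≤ k → 1 - 2 * (c k : ℝ) / (l k : ℝ) < 1 := by
    intro k hk
    have h1 := hl0 k hk
    have h2 : (1:ℝ) ≤ c k := by exact_mod_cast hc k hk
    have : 0 < 2 * (c k : ℝ) / (l k : ℝ) := by positivity
    linarith
  have πpos : ∀ n, 0 < π n := by
    intro n
    rw [hπ]
    exact Finset.prod_pos fun k hk => hfac_pos k (Finset.mem_Icc.mp hk).1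
  have πanti : StrictAnti π := by
    apply strictAnti_nat_of_succ_lt
    intro n
    have hstep : π (n + 1) = π n * (1 - 2 * (c (n+1) : ℝ) / (l (n+1) : ℝ)) := by
      rw [hπ, hπ, Finset.prod_Icc_succ_top (by omega : 1 ≤ n + 1)]
    rw [hstep]
    have := hfac_lt (n+1) (by omega)
    have := πpos n
    nlinarith
  have πle1 : ∀ n, π n ≤ 1 := by
    intro n
    rw [hπ]
    apply Finset.prod_le_one
    · intro k hk; exact (hfac_pos k (Finset.mem_Icc.mp hk).1).le
    · intro k hk; exact (hfac_lt k (Finset.mem_Icc.mp hk).1).le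
  have hlam_le : ∀ n, lam ≤ π n := by
    intro n
    exact le_of_tendsto hlam (eventually_atTop.mpr ⟨n, fun k hk => πanti.antitone hk⟩)
  have hlam_lt : ∀ n, lam < π n := fun n =>
    lt_of_le_of_lt (hlam_le (n+1)) (πanti (by omega : n < n + 1))
  have hlam0 : 0 ≤ lam := ge_of_tendsto' hlam fun n => (πpos n).le
  have hRpos : ∀ n, 0 < r n := by
    intro n; rw [hr]
    exact Finset.prod_pos fun k hk => by
      have := hl k (Finset.mem_Icc.mp hk).1; omega
  have hR'pos : ∀ n, 0 < r' n := by
    intro n; rw [hr']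
    exact Finset.prod_pos fun k hk => by
      have := hl k (Finset.mem_Icc.mp hk).1; omega
  have hπrr : ∀ n, π n = (r' n : ℝ) / (r n : ℝ) := by
    intro n
    rw [hπ, hr, hr']
    push_cast
    rw [← Finset.prod_div_distrib]
    apply Finset.prod_congr rfl
    intro k hk
    have hk1 := (Finset.mem_Icc.mp hk).1
    have h2 : 2 * c k ≤ l k := by have := hl k hk1; omega
    have hlne : (l k : ℝ) ≠ 0 := (hl0 k hk1).ne'
    rw [Nat.cast_sub h2]
    push_cast
    field_simp
  refine ⟨πanti, fun n => ⟨πpos n, πle1 n⟩, ?_⟩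
  intro n m₁ m₂ hm₁ hm₂
  have hRne : ((r n : ℚ)) ≠ 0 := by exact_mod_cast (hRpos n).ne'
  have hR'ne : ((r' n : ℚ)) ≠ 0 := by exact_mod_cast (hR'pos n).ne'
  have hiff : γ n (m₁, m₂) = (0, 0) ↔ m₁ = 0 ∧ m₂ = 0 := by
    rw [hγ, Prod.mk.injEq]
    constructor
    · rintro ⟨h1, h2⟩
      rw [div_eq_zero_iff] at h1 h2
      have e1 : (m₁ : ℚ) + (m₂ : ℚ) = 0 := by
        rcases h1 with h | h
        · exact h
        · exact absurd h (by positivity)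
      have e2 : m₁ + m₂ = 0 := by exact_mod_cast e1
      constructor <;> omega
    · rintro ⟨h1, h2⟩
      subst h1; subst h2
      norm_num
  refine ⟨hiff, ?_⟩
  intro hne
  have hnz : ¬(m₁ = 0 ∧ m₂ = 0) := fun h => hne (hiff.mpr h)
  have hsum : 0 < m₁ + m₂ := by omega
  rw [hγ]
  simp only
  push_cast
  set R : ℝ := (r n : ℝ) with hRdef
  set R' : ℝ := (r' n : ℝ) with hR'def
  have hRposR : (0:ℝ) < R := by rw [hRdef]; exact_mod_cast hRpos n
  have hR'posR : (0:ℝ) < R' := by rw [hR'def]; exact_mod_cast hR'pos n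
  have hXpos : (0:ℝ) < ((m₁ : ℝ) + (m₂ : ℝ)) / (2 * R) := by
    apply div_pos _ (by positivity)
    have : (0:ℝ) < (m₁ + m₂ : ℤ) := by exact_mod_cast hsum
    push_cast at this; linarith
  by_cases hy : (m₁ : ℝ) - (m₂ : ℝ) = 0
  · rw [hy]
    simpa using hXpos
  · have habsY : |((m₁:ℝ) - m₂) / (2 * R')| = |(m₁:ℝ) - m₂| / (2 * R') := by
      rw [abs_div, abs_of_pos (by positivity : (0:ℝ) < 2 * R')]
    rw [habsY]
    have habspos : 0 < |(m₁:ℝ) - m₂| := abs_pos.mpr hy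
    have hYpos : 0 < |(m₁:ℝ) - m₂| / (2 * R') := by positivity
    have hstep1 : lam * (|(m₁:ℝ) - m₂| / (2 * R')) < π n * (|(m₁:ℝ) - m₂| / (2 * R')) :=
      mul_lt_mul_of_pos_right (hlam_lt n) hYpos
    have hstep2 : π n * (|(m₁:ℝ) - m₂| / (2 * R')) = |(m₁:ℝ) - m₂| / (2 * R) := by
      rw [hπrr n, ← hRdef, ← hR'def]
      field_simp
    have hstep3 : |(m₁:ℝ) - m₂| / (2 * R) ≤ ((m₁:ℝ) + m₂) / (2 * R) := by
      have a1 : (0:ℝ) ≤ (m₁:ℝ) := by exact_mod_cast hm₁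
      have a2 : (0:ℝ) ≤ (m₂:ℝ) := by exact_mod_cast hm₂
      gcongr
      exact abs_le.mpr ⟨by linarith, by linarith⟩
    calc lam * (|(m₁:ℝ) - m₂| / (2 * R')) < |(m₁:ℝ) - m₂| / (2 * R) := by rw [← hstep2]; exact hstep1
      _ ≤ ((m₁:ℝ) + m₂) / (2 * R) := hstep3
end

section
/- In the setting of CTXA, with π_n = ∏_{k=1}^{n} (1 − 2c(k)/l(k)) and λ = lim_{n→∞} π_n, assume additionally that for every positive integer k there exist n, n' ∈ ℤ_{>0} such that k divides r(n) and k divides r'(n'). If (x, y) ∈ ℚ × ℚ satisfies x > λ|y|, then there exist n ≥ 0 and nonnegative integers m_1, m_2 such that γ_n(m_1, m_2) = (x, y). -/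
open Filter

private lemma int_of_den_dvd (q : ℚ) (m : ℕ) (h : q.den ∣ m) :
    ∃ z : ℤ, (z : ℚ) = (m : ℚ) * q := by
  obtain ⟨t, ht⟩ := h
  refine ⟨(t : ℤ) * q.num, ?_⟩
  have hden : (q.den : ℚ) * q = (q.num : ℚ) := by
    rw [mul_comm]; exact_mod_cast q.mul_den_eq_num
  push_cast [ht]
  rw [mul_comm (q.den : ℚ) (t : ℚ), mul_assoc, hden, mul_comm]

/-- setting CTXA: with `λ = lim_N ∏_{k=1}^N (1 − 2c(k)/l(k))`, under the
divisibility assumption on `r` and `r'`, every `(x, y) ∈ ℚ × ℚ` with `x > λ|y|` is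
`γ_n(m₁, m₂)` for some `n` and some nonnegative integers `m₁, m₂`. -/
theorem stmt_7 (l c : ℕ → ℕ) (hc : ∀ n, 1 ≤ n → 1 ≤ c n)
    (hl : ∀ n, 1 ≤ n → 2 * c n + 1 ≤ l n)
    (r r' : ℕ → ℕ)
    (hr : ∀ n, r n = ∏ k ∈ Finset.Icc 1 n, l k)
    (hr' : ∀ n, r' n = ∏ k ∈ Finset.Icc 1 n, (l k - 2 * c k))
    (γ : ℕ → ℤ × ℤ → ℚ × ℚ)
    (hγ : ∀ n M, γ n M = (((M.1 : ℚ) + (M.2 : ℚ)) / (2 * (r n : ℚ)),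
                          ((M.1 : ℚ) - (M.2 : ℚ)) / (2 * (r' n : ℚ))))
    (π : ℕ → ℝ)
    (hπ : ∀ n, π n = ∏ k ∈ Finset.Icc 1 n, (1 - 2 * (c k : ℝ) / (l k : ℝ)))
    (lam : ℝ) (hlam : Tendsto π atTop (nhds lam))
    (hdiv : ∀ k : ℕ, 0 < k → ∃ n n' : ℕ, 0 < n ∧ 0 < n' ∧ k ∣ r n ∧ k ∣ r' n')
    (x y : ℚ) (hxy : (x : ℝ) > lam * |(y : ℝ)|) :
    ∃ (n : ℕ) (m₁ m₂ : ℕ), γ n ((m₁ : ℤ), (m₂ : ℤ)) = (x, y) := by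
  -- basic positivity
  have hrpos : ∀ n, 0 < r n := by
    intro n; rw [hr]
    exact Finset.prod_pos (fun k hk => by
      have := hl k (Finset.mem_Icc.mp hk).1; omega)
  have hr'pos : ∀ n, 0 < r' n := by
    intro n; rw [hr']
    exact Finset.prod_pos (fun k hk => by
      have := hl k (Finset.mem_Icc.mp hk).1; omega)
  -- monotone divisibility
  have hrdvd : ∀ m n : ℕ, m ≤ n → r m ∣ r n := by
    intro m n hmn; rw [hr, hr]
    exact Finset.prod_dvd_prod_of_subset _ _ _ (Finset.Icc_subset_Icc le_rfl hmn)
  have hr'dvd : ∀ m n : ℕ, m ≤ n → r' m ∣ r' n := by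
    intro m n hmn; rw [hr', hr']
    exact Finset.prod_dvd_prod_of_subset _ _ _ (Finset.Icc_subset_Icc le_rfl hmn)
  -- π n * r n = r' n  (over ℝ)
  have hkey : ∀ n, π n * (r n : ℝ) = (r' n : ℝ) := by
    intro n
    rw [hπ, hr, hr']
    rw [Nat.cast_prod, Nat.cast_prod, ← Finset.prod_mul_distrib]
    refine Finset.prod_congr rfl (fun k hk => ?_)
    have h1 := hl k (Finset.mem_Icc.mp hk).1
    have hl0 : (0 : ℝ) < (l k : ℝ) := by
      exact_mod_cast Nat.cast_pos.mpr (by omega)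
    rw [Nat.cast_sub (by omega : 2 * c k ≤ l k)]
    push_cast
    field_simp
  -- choose N₁ from divisibility for denominators
  obtain ⟨n₁, _, _, _, hdx, _⟩ := hdiv x.den x.den_pos
  obtain ⟨_, n₂, _, _, _, hdy⟩ := hdiv y.den y.den_pos
  -- choose N₂ from convergence
  have hconv : Tendsto (fun n => π n * |(y : ℝ)|) atTop (nhds (lam * |(y : ℝ)|)) :=
    hlam.mul_const _
  have hev : ∀ᶠ n in atTop, π n * |(y : ℝ)| < (x : ℝ) :=
    hconv.eventually_lt_const hxy
  obtain ⟨N, hN⟩ := eventually_atTop.mp hev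
  set n := max N (max n₁ n₂) with hn
  have hxdvd : x.den ∣ r n := hdx.trans (hrdvd n₁ n (le_trans (le_max_left _ _) (le_max_right _ _)))
  have hydvd : y.den ∣ r' n := hdy.trans (hr'dvd n₂ n (le_trans (le_max_right _ _) (le_max_right _ _)))
  obtain ⟨a, ha⟩ := int_of_den_dvd x (r n) hxdvd
  obtain ⟨b, hb⟩ := int_of_den_dvd y (r' n) hydvd
  -- the inequality: r' n * |y| < r n * x over ℚ
  have hlt : (r' n : ℚ) * |y| < (r n : ℚ) * x := by
    have h1 : π n * |(y : ℝ)| < (x : ℝ) := hN n (le_max_left _ _)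
    have h2 : (r' n : ℝ) * |(y : ℝ)| < (r n : ℝ) * (x : ℝ) := by
      rw [← hkey n]
      have hrpos' : (0 : ℝ) < (r n : ℝ) := by exact_mod_cast hrpos n
      calc π n * (r n : ℝ) * |(y : ℝ)| = (π n * |(y : ℝ)|) * (r n : ℝ) := by ring
        _ < (x : ℝ) * (r n : ℝ) := by exact mul_lt_mul_of_pos_right h1 hrpos'
        _ = (r n : ℝ) * (x : ℝ) := by ring
    exact_mod_cast (by push_cast [← Rat.cast_abs]; exact_mod_cast h2 :
      ((r' n : ℚ) * |y| : ℚ) < ((r n : ℚ) * x : ℚ))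
  -- |b| < a in ℤ
  have habs : |b| < a := by
    have : (|b| : ℚ) < (a : ℚ) := by
      rw [ha]
      calc (|b| : ℚ) = |(b : ℚ)| := by push_cast; rfl
        _ = |(r' n : ℚ) * y| := by rw [hb]
        _ = (r' n : ℚ) * |y| := by
            rw [abs_mul, abs_of_nonneg (by positivity : (0:ℚ) ≤ (r' n : ℚ))]
        _ < (r n : ℚ) * x := hlt
    exact_mod_cast this
  have h1 : 0 ≤ a + b := by
    have := abs_lt.mp habs; omega
  have h2 : 0 ≤ a - b := by
    have := abs_lt.mp habs; omega
  refine ⟨n, (a + b).toNat, (a - b).toNat, ?_⟩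
  rw [hγ]
  have e1 : (((a + b).toNat : ℤ) : ℚ) = (a : ℚ) + (b : ℚ) := by
    rw [Int.toNat_of_nonneg h1]; push_cast; ring
  have e2 : (((a - b).toNat : ℤ) : ℚ) = (a : ℚ) - (b : ℚ) := by
    rw [Int.toNat_of_nonneg h2]; push_cast; ring
  have hrne : (r n : ℚ) ≠ 0 := by exact_mod_cast (hrpos n).ne'
  have hr'ne : (r' n : ℚ) ≠ 0 := by
    exact_mod_cast (hr'pos n).ne'
  refine Prod.ext ?_ ?_ <;> simp only [e1, e2]
  · show ((a : ℚ) + b + ((a : ℚ) - b)) / (2 * (r n : ℚ)) = x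
    rw [ha]; field_simp; ring
  · show ((a : ℚ) + b - ((a : ℚ) - b)) / (2 * (r' n : ℚ)) = y
    rw [hb]; field_simp; ring
end

section
/- In the setting of CTXC: if f : ℚ × ℚ → ℚ × ℚ is an additive bijection with f((1,0)) = (1,0) such that both f and f⁻¹ map the cone C_λ into C_λ, then f is either the identity map or the map σ(x, y) = (x, −y). In particular, (ℚ × ℚ, C_λ, (1,0)) has exactly one nontrivial automorphism as a scaled ordered group. -/
private lemma limit_aux (L c : ℝ) (h : ∀ q : ℚ, L < (q : ℝ) → c < (q : ℝ)) : c ≤ L := by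
  by_contra h'
  push_neg at h'
  obtain ⟨q, hq1, hq2⟩ := exists_rat_btwn h'
  exact absurd (h q hq1) (not_lt.mpr hq2.le)

/-- setting CTXC: if `f : ℚ × ℚ → ℚ × ℚ` is an additive bijection fixing
`(1, 0)` which preserves the cone `C_λ` in both directions, then `f` is the identity or
the flip `σ(x, y) = (x, −y)`.  In particular, `(ℚ × ℚ, C_λ, (1,0))` has exactly one
nontrivial automorphism as a scaled ordered group. -/
theorem stmt_9 (lam : ℝ) (hlam : 0 < lam)
    (C : Set (ℚ × ℚ))
    (hC : C = {z : ℚ × ℚ | z = (0, 0) ∨ (z.1 : ℝ) > lam * |(z.2 : ℝ)|})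
    (f : ℚ × ℚ → ℚ × ℚ) (hbij : Function.Bijective f)
    (hadd : ∀ a b : ℚ × ℚ, f (a + b) = f a + f b)
    (hunit : f (1, 0) = (1, 0))
    (hcone : ∀ z : ℚ × ℚ, f z ∈ C ↔ z ∈ C) :
    f = id ∨ f = fun z : ℚ × ℚ => (z.1, -z.2) := by
  set b := (f (0, 1)).1 with hb
  set d := (f (0, 1)).2 with hd
  -- f is ℚ-linear, hence determined by its values on the basis
  have hf : ∀ z : ℚ × ℚ, f z = (z.1 + z.2 * b, z.2 * d) := by
    intro z
    have hz : z = z.1 • ((1 : ℚ), (0 : ℚ)) + z.2 • ((0 : ℚ), (1 : ℚ)) := by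
      ext <;> simp
    have h1 : f (z.1 • ((1 : ℚ), (0 : ℚ))) = z.1 • f (1, 0) :=
      map_rat_smul (AddMonoidHom.mk' f hadd) z.1 _
    have h2 : f (z.2 • ((0 : ℚ), (1 : ℚ))) = z.2 • f (0, 1) :=
      map_rat_smul (AddMonoidHom.mk' f hadd) z.2 _
    calc f z = f (z.1 • ((1 : ℚ), (0 : ℚ))) + f (z.2 • ((0 : ℚ), (1 : ℚ))) := by
          rw [← hadd, ← hz]
      _ = z.1 • f (1, 0) + z.2 • f (0, 1) := by rw [h1, h2]
      _ = (z.1 + z.2 * b, z.2 * d) := by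
          rw [hunit]
          ext <;> simp [hb, hd, mul_comm]
  -- d ≠ 0 from injectivity
  have hd0 : d ≠ 0 := by
    intro h0
    have : f (0, 1) = f (b, 0) := by
      rw [hf (b, 0)]
      ext
      · simp [hb]
      · simp [hd.symm ▸ h0, h0]
    have := hbij.1 this
    simp [Prod.ext_iff] at this
  have hdR : (0 : ℝ) < |(d : ℝ)| := by
    rw [abs_pos]
    exact_mod_cast hd0
  -- membership extraction
  have memC : ∀ p q : ℚ, q ≠ 0 → (p, q) ∈ C → lam * |(q : ℝ)| < (p : ℝ) := by
    intro p q hq hm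
    rw [hC] at hm
    rcases hm with h | h
    · simp [Prod.ext_iff] at h; exact absurd h.2 hq
    · exact h
  have memC' : ∀ p q : ℚ, lam * |(q : ℝ)| < (p : ℝ) → (p, q) ∈ C := by
    intro p q h
    rw [hC]
    exact Or.inr h
  -- key inequalities from the forward cone preservation (y = ±1)
  have keyA : ∀ y : ℚ, y ≠ 0 → ∀ q : ℚ, lam * |(y : ℝ)| < (q : ℝ) →
      lam * |(y : ℝ)| * |(d : ℝ)| < (q : ℝ) + (y : ℝ) * (b : ℝ) := by
    intro y hy q hq
    have hmem : (q, y) ∈ C := memC' q y hq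
    have hfm : f (q, y) ∈ C := (hcone _).mpr hmem
    rw [hf (q, y)] at hfm
    have hyd : y * d ≠ 0 := mul_ne_zero hy hd0
    have := memC _ _ hyd hfm
    push_cast [abs_mul] at this ⊢
    linarith
  -- key inequalities from the backward cone preservation
  have keyB : ∀ y : ℚ, y ≠ 0 → ∀ q : ℚ, lam * |(y : ℝ)| * |(d : ℝ)| < (q : ℝ) →
      lam * |(y : ℝ)| < (q : ℝ) - (y : ℝ) * (b : ℝ) := by
    intro y hy q hq
    have hfz : f (q - y * b, y) = (q, y * d) := by
      rw [hf]
      simp only [Prod.mk.injEq]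
      constructor <;> simp
    have hmem : (q, y * d) ∈ C := by
      apply memC'
      push_cast [abs_mul]
      linarith
    have hzm : (q - y * b, y) ∈ C := (hcone _).mp (hfz ▸ hmem)
    have := memC _ _ hy hzm
    push_cast at this
    linarith
  -- four limit inequalities
  have A1 : lam * |(d : ℝ)| - (b : ℝ) ≤ lam := by
    apply limit_aux
    intro q hq
    have := keyA 1 one_ne_zero q (by simpa using hq)
    simp only [Rat.cast_one, abs_one, mul_one, one_mul] at this
    linarith
  have A2 : lam * |(d : ℝ)| + (b : ℝ) ≤ lam := by
    apply limit_aux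
    intro q hq
    have := keyA (-1) (by norm_num) q (by simpa using hq)
    simp only [Rat.cast_neg, Rat.cast_one, abs_neg, abs_one, mul_one, neg_one_mul] at this
    linarith
  have B1 : lam + (b : ℝ) ≤ lam * |(d : ℝ)| := by
    apply limit_aux
    intro q hq
    have := keyB 1 one_ne_zero q (by simpa using hq)
    simp only [Rat.cast_one, abs_one, mul_one, one_mul] at this
    linarith
  have B2 : lam - (b : ℝ) ≤ lam * |(d : ℝ)| := by
    apply limit_aux
    intro q hq
    have := keyB (-1) (by norm_num) q (by simpa using hq)
    simp only [Rat.cast_neg, Rat.cast_one, abs_neg, abs_one, mul_one, neg_one_mul] at this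
    linarith
  -- conclude |d| = 1 and b = 0
  have hD1 : |(d : ℝ)| = 1 := by nlinarith
  have hb0 : b = 0 := by
    have h1 : (b : ℝ) ≤ 0 := by nlinarith
    have h2 : (0 : ℝ) ≤ (b : ℝ) := by nlinarith
    exact_mod_cast le_antisymm h1 h2
  have hdpm : d = 1 ∨ d = -1 := by
    have : |d| = 1 := by
      have : ((|d| : ℚ) : ℝ) = 1 := by push_cast; exact hD1
      exact_mod_cast this
    rcases abs_eq (by norm_num : (0:ℚ) ≤ 1) |>.mp this with h | h
    · exact Or.inl h
    · exact Or.inr h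
  rcases hdpm with h | h
  · left
    funext z
    rw [hf z, hb0, h]
    simp
  · right
    funext z
    rw [hf z, hb0, h]
    simp
end

section
/- In the setting of CTXC: let b, d ∈ ℚ with b ≥ 0 and d ≥ 1, and define Q : ℚ × ℚ → ℚ × ℚ by Q(x, y) = (x + b y, d y). If Q maps the cone C_λ into itself, then b = 0 and d = 1. -/
/-- setting CTXC: if `b, d ∈ ℚ` satisfy `b ≥ 0` and `d ≥ 1`, and
`Q(x, y) = (x + b y, d y)` maps the cone `C_λ` into itself, then `b = 0` and `d = 1`. -/
theorem stmt_10 (lam : ℝ) (hlam : 0 < lam)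
    (C : Set (ℚ × ℚ))
    (hC : C = {z : ℚ × ℚ | z = (0, 0) ∨ (z.1 : ℝ) > lam * |(z.2 : ℝ)|})
    (b d : ℚ) (hb : 0 ≤ b) (hd : 1 ≤ d)
    (Q : ℚ × ℚ → ℚ × ℚ) (hQ : ∀ z : ℚ × ℚ, Q z = (z.1 + b * z.2, d * z.2))
    (hcone : ∀ z ∈ C, Q z ∈ C) :
    b = 0 ∧ d = 1 := by
  by_contra hcontra
  -- Then lam < lam * d + b
  have hbR : (0:ℝ) ≤ (b:ℝ) := by exact_mod_cast hb
  have hdR : (1:ℝ) ≤ (d:ℝ) := by exact_mod_cast hd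
  have hlt : lam < lam * d + b := by
    rcases eq_or_lt_of_le hbR with hb0 | hbpos
    · rcases eq_or_lt_of_le hdR with hd0 | hdpos
      · exfalso; exact hcontra ⟨by exact_mod_cast hb0.symm, by exact_mod_cast hd0.symm⟩
      · nlinarith
    · nlinarith
  obtain ⟨q, hq1, hq2⟩ := exists_rat_btwn hlt
  have hzC : ((q, -1) : ℚ × ℚ) ∈ C := by
    rw [hC]
    right
    simp only [Rat.cast_neg, Rat.cast_one, abs_neg, abs_one, mul_one]
    exact hq1
  have hQz := hcone _ hzC
  rw [hQ, hC] at hQz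
  simp only [Set.mem_setOf_eq, Prod.mk.injEq] at hQz
  rcases hQz with ⟨_, h2⟩ | h
  · have : d * (-1) = 0 := h2
    have : d = 0 := by linarith [this]
    linarith [hd, this]
  · push_cast at h
    simp only [mul_neg_one, abs_neg] at h
    rw [abs_of_nonneg (by linarith : (0:ℝ) ≤ (d:ℝ))] at h
    linarith
end

section
/- In the setting of CTXB: for every n ≥ 0 one has t(n)/r(n) ≤ 1 − s(n)/r(n); equivalently, t(n) + s(n) ≤ r(n). -/
/-- setting CTXB: for every `n` one has `t(n)/r(n) ≤ 1 − s(n)/r(n)`,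
equivalently `t(n) + s(n) ≤ r(n)`. -/
theorem stmt_11 (l c : ℕ → ℕ) (hc : ∀ n, 1 ≤ n → 1 ≤ c n)
    (hl : ∀ n, 1 ≤ n → 2 * c n + 1 ≤ l n)
    (d : ℕ → ℕ) (hd : ∀ n, d n = l n - c n)
    (r s : ℕ → ℕ)
    (hr : ∀ n, r n = ∏ k ∈ Finset.Icc 1 n, l k)
    (hs : ∀ n, s n = ∏ k ∈ Finset.Icc 1 n, d k)
    (t : ℕ → ℤ) (ht0 : t 0 = 0)
    (ht : ∀ n, t (n + 1) = (d (n + 1) : ℤ) * t n + (c (n + 1) : ℤ) * ((r n : ℤ) - t n)) :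
    ∀ n, t n + (s n : ℤ) ≤ (r n : ℤ) := by
  have hsr : ∀ n, s n ≤ r n := by
    intro n
    rw [hs, hr]
    apply Finset.prod_le_prod
    · intro k _; exact Nat.zero_le _
    · intro k _; rw [hd]; exact Nat.sub_le _ _
  intro n
  induction n with
  | zero =>
    simp [ht0, hs, hr]
  | succ n IH =>
    have h1 : 1 ≤ n + 1 := Nat.le_add_left 1 n
    have hrS : (r (n + 1) : ℤ) = (l (n + 1) : ℤ) * (r n : ℤ) := by
      rw [hr, hr, Finset.prod_Icc_succ_top h1]
      push_cast; ring
    have hsS : (s (n + 1) : ℤ) = (d (n + 1) : ℤ) * (s n : ℤ) := by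
      rw [hs, hs, Finset.prod_Icc_succ_top h1]
      push_cast; ring
    have hdS : (d (n + 1) : ℤ) = (l (n + 1) : ℤ) - (c (n + 1) : ℤ) := by
      rw [hd]
      have : c (n + 1) ≤ l (n + 1) := by
        have := hl (n + 1) h1; omega
      push_cast [Nat.cast_sub this]; ring
    have hL := hl (n + 1) h1
    have hC := hc (n + 1) h1
    have hLZ : (2 : ℤ) * (c (n + 1) : ℤ) + 1 ≤ (l (n + 1) : ℤ) := by exact_mod_cast hL
    have hCZ : (1 : ℤ) ≤ (c (n + 1) : ℤ) := by exact_mod_cast hC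
    have hsrZ : (s n : ℤ) ≤ (r n : ℤ) := by exact_mod_cast hsr n
    rw [ht, hrS, hsS, hdS]
    nlinarith [mul_le_mul_of_nonneg_left IH (by linarith : (0:ℤ) ≤ (l (n+1) : ℤ) - 2 * (c (n+1) : ℤ)),
      mul_le_mul_of_nonneg_left hsrZ (by linarith : (0:ℤ) ≤ (c (n+1) : ℤ))]
end

section
/- In the setting of CTXB: the sequence n ↦ t(n)/r(n) is strictly increasing (so 0 = t(0)/r(0) < t(1)/r(1) < t(2)/r(2) < ⋯), and t(n)/r(n) < 1 − κ₁ for every n ≥ 0. -/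
open Filter

/-- setting CTXB: the sequence `n ↦ t(n)/r(n)` is strictly increasing and
bounded above by `1 − κ₁`, where `κ₁ = lim_n s(n)/r(n)`. -/
theorem stmt_12 (l c : ℕ → ℕ) (hc : ∀ n, 1 ≤ n → 1 ≤ c n)
    (hl : ∀ n, 1 ≤ n → 2 * c n + 1 ≤ l n)
    (d : ℕ → ℕ) (hd : ∀ n, d n = l n - c n)
    (r s : ℕ → ℕ)
    (hr : ∀ n, r n = ∏ k ∈ Finset.Icc 1 n, l k)
    (hs : ∀ n, s n = ∏ k ∈ Finset.Icc 1 n, d k)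
    (t : ℕ → ℤ) (ht0 : t 0 = 0)
    (ht : ∀ n, t (n + 1) = (d (n + 1) : ℤ) * t n + (c (n + 1) : ℤ) * ((r n : ℤ) - t n))
    (κ₁ : ℝ)
    (hκ₁ : Tendsto (fun n => (s n : ℝ) / (r n : ℝ)) atTop (nhds κ₁)) :
    StrictMono (fun n => (t n : ℝ) / (r n : ℝ)) ∧
      ∀ n, (t n : ℝ) / (r n : ℝ) < 1 - κ₁ := by
  -- basic facts about c, d, l
  have hdge : ∀ k, 1 ≤ k → c k + 1 ≤ d k := by
    intro k hk; have := hl k hk; have := hc k hk; rw [hd]; omega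
  have hld : ∀ k, 1 ≤ k → l k = d k + c k := by
    intro k hk; have := hl k hk; have := hc k hk; rw [hd]; omega
  have hdl : ∀ k, 1 ≤ k → d k < l k := by
    intro k hk; have := hc k hk; rw [hld k hk]; omega
  -- recurrences for r, s
  have hr0 : r 0 = 1 := by rw [hr]; simp
  have hs0 : s 0 = 1 := by rw [hs]; simp
  have hrsucc : ∀ n, r (n + 1) = r n * l (n + 1) := by
    intro n; rw [hr, hr, Finset.prod_Icc_succ_top (by omega)]
  have hssucc : ∀ n, s (n + 1) = s n * d (n + 1) := by
    intro n; rw [hs, hs, Finset.prod_Icc_succ_top (by omega)]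
  have hrpos : ∀ n, 0 < r n := by
    intro n; induction n with
    | zero => omega
    | succ n ih =>
        have h3 : 0 < l (n + 1) := by have := hl (n + 1) (by omega); omega
        rw [hrsucc]; positivity
  have hspos : ∀ n, 0 < s n := by
    intro n; induction n with
    | zero => omega
    | succ n ih =>
        have h3 : 0 < d (n + 1) := by have := hdge (n + 1) (by omega); omega
        rw [hssucc]; positivity
  -- invariant: 0 ≤ t n and 2 t n < r n
  have hinv : ∀ n, 0 ≤ t n ∧ 2 * t n < (r n : ℤ) := by
    intro n; induction n with
    | zero => rw [ht0, hr0]; norm_num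
    | succ n ih =>
        obtain ⟨h1, h2⟩ := ih
        have hdc : (c (n + 1) : ℤ) + 1 ≤ (d (n + 1) : ℤ) := by
          exact_mod_cast hdge (n + 1) (by omega)
        have hc1 : (1 : ℤ) ≤ (c (n + 1) : ℤ) := by exact_mod_cast hc (n + 1) (by omega)
        have hlz : (l (n + 1) : ℤ) = (d (n + 1) : ℤ) + (c (n + 1) : ℤ) := by
          exact_mod_cast hld (n + 1) (by omega)
        have hrz : (r (n + 1) : ℤ) = (r n : ℤ) * (l (n + 1) : ℤ) := by
          exact_mod_cast hrsucc n
        constructor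
        · rw [ht]; nlinarith
        · rw [ht, hrz, hlz]
          nlinarith [mul_le_mul_of_nonneg_right h2.le (show (0:ℤ) ≤ (d (n+1) : ℤ) - (c (n+1) : ℤ) by linarith)]
  -- strict monotonicity
  have hmono : StrictMono (fun n => (t n : ℝ) / (r n : ℝ)) := by
    apply strictMono_nat_of_lt_succ
    intro n
    have hrn : (0 : ℝ) < (r n : ℝ) := by exact_mod_cast hrpos n
    have hrn1 : (0 : ℝ) < (r (n + 1) : ℝ) := by exact_mod_cast hrpos (n + 1)
    rw [div_lt_div_iff₀ hrn hrn1]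
    have key : (t n : ℤ) * (r (n + 1) : ℤ) < (t (n + 1) : ℤ) * (r n : ℤ) := by
      obtain ⟨h1, h2⟩ := hinv n
      have hc1 : (1 : ℤ) ≤ (c (n + 1) : ℤ) := by exact_mod_cast hc (n + 1) (by omega)
      have hlz : (l (n + 1) : ℤ) = (d (n + 1) : ℤ) + (c (n + 1) : ℤ) := by
        exact_mod_cast hld (n + 1) (by omega)
      have hrz : (r (n + 1) : ℤ) = (r n : ℤ) * (l (n + 1) : ℤ) := by
        exact_mod_cast hrsucc n
      have hrnz : (0 : ℤ) < (r n : ℤ) := by exact_mod_cast hrpos n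
      rw [ht, hrz, hlz]
      nlinarith [mul_pos (mul_pos (show (0:ℤ) < (c (n+1) : ℤ) by linarith) hrnz)
        (show (0:ℤ) < (r n : ℤ) - 2 * t n by linarith)]
    exact_mod_cast key
  refine ⟨hmono, ?_⟩
  -- r n - t n ≥ s n
  have hrt : ∀ n, (s n : ℤ) ≤ (r n : ℤ) - t n := by
    intro n; induction n with
    | zero => rw [ht0, hr0, hs0]; norm_num
    | succ n ih =>
        obtain ⟨h1, h2⟩ := hinv n
        have hdc : (c (n + 1) : ℤ) + 1 ≤ (d (n + 1) : ℤ) := by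
          exact_mod_cast hdge (n + 1) (by omega)
        have hc1 : (1 : ℤ) ≤ (c (n + 1) : ℤ) := by exact_mod_cast hc (n + 1) (by omega)
        have hlz : (l (n + 1) : ℤ) = (d (n + 1) : ℤ) + (c (n + 1) : ℤ) := by
          exact_mod_cast hld (n + 1) (by omega)
        have hrz : (r (n + 1) : ℤ) = (r n : ℤ) * (l (n + 1) : ℤ) := by
          exact_mod_cast hrsucc n
        have hsz : (s (n + 1) : ℤ) = (s n : ℤ) * (d (n + 1) : ℤ) := by
          exact_mod_cast hssucc n
        rw [ht, hrz, hsz, hlz]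
        nlinarith [mul_le_mul_of_nonneg_right ih (show (0:ℤ) ≤ (d (n+1) : ℤ) by linarith)]
  -- s n / r n is antitone
  have hanti : Antitone (fun n => (s n : ℝ) / (r n : ℝ)) := by
    apply antitone_nat_of_succ_le
    intro n
    have hrn : (0 : ℝ) < (r n : ℝ) := by exact_mod_cast hrpos n
    have hrn1 : (0 : ℝ) < (r (n + 1) : ℝ) := by exact_mod_cast hrpos (n + 1)
    rw [div_le_div_iff₀ hrn1 hrn]
    have hrz : ((r (n + 1) : ℝ)) = (r n : ℝ) * (l (n + 1) : ℝ) := by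
      exact_mod_cast hrsucc n
    have hsz : ((s (n + 1) : ℝ)) = (s n : ℝ) * (d (n + 1) : ℝ) := by
      exact_mod_cast hssucc n
    have hdlr : (d (n + 1) : ℝ) ≤ (l (n + 1) : ℝ) := by
      exact_mod_cast le_of_lt (hdl (n + 1) (by omega))
    have hsn : (0 : ℝ) ≤ (s n : ℝ) := by positivity
    rw [hrz, hsz]
    nlinarith [mul_nonneg (mul_nonneg hsn hrn.le)
      (show (0:ℝ) ≤ (l (n+1) : ℝ) - (d (n+1) : ℝ) by linarith)]
  have hκle : ∀ n, κ₁ ≤ (s n : ℝ) / (r n : ℝ) := by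
    intro n
    apply le_of_tendsto hκ₁
    filter_upwards [eventually_ge_atTop n] with m hm
    exact hanti hm
  intro n
  have hrn : (0 : ℝ) < (r n : ℝ) := by exact_mod_cast hrpos n
  have hrn1 : (0 : ℝ) < (r (n + 1) : ℝ) := by exact_mod_cast hrpos (n + 1)
  have hsn : (0 : ℝ) < (s n : ℝ) := by exact_mod_cast hspos n
  have hstrict : (s (n + 1) : ℝ) / (r (n + 1) : ℝ) < (s n : ℝ) / (r n : ℝ) := by
    rw [div_lt_div_iff₀ hrn1 hrn]
    have hrz : ((r (n + 1) : ℝ)) = (r n : ℝ) * (l (n + 1) : ℝ) := by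
      exact_mod_cast hrsucc n
    have hsz : ((s (n + 1) : ℝ)) = (s n : ℝ) * (d (n + 1) : ℝ) := by
      exact_mod_cast hssucc n
    have hdlr : (d (n + 1) : ℝ) < (l (n + 1) : ℝ) := by
      exact_mod_cast hdl (n + 1) (by omega)
    rw [hrz, hsz]
    nlinarith [mul_pos (mul_pos hsn hrn)
      (show (0:ℝ) < (l (n+1) : ℝ) - (d (n+1) : ℝ) by linarith)]
  have h1' : (s n : ℝ) / (r n : ℝ) ≤ 1 - (t n : ℝ) / (r n : ℝ) := by
    have hle : (s n : ℝ) ≤ (r n : ℝ) - (t n : ℝ) := by exact_mod_cast hrt n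
    have heq : 1 - (t n : ℝ) / (r n : ℝ) = ((r n : ℝ) - (t n : ℝ)) / (r n : ℝ) := by
      field_simp
    rw [heq]
    gcongr
  have : κ₁ < 1 - (t n : ℝ) / (r n : ℝ) :=
    lt_of_le_of_lt (hκle (n + 1)) (lt_of_lt_of_le hstrict h1')
  linarith
end

section
/- In the setting of CTXB, assume κ₁ > 1/2. Then the limit λ' = lim_{n→∞} t(n)/s(n) exists and satisfies 0 < c(1)/l(1) ≤ κ₁ λ' < 1 − κ₁ < 1/2; moreover the limit κ₁' = lim_{n→∞} s(n)/(r(n) − t(n)) exists and κ₁' = κ₁/(1 − κ₁ λ'). -/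
open Filter

set_option maxHeartbeats 2000000

/-- setting CTXB: if `κ₁ > 1/2`, then `λ' = lim_n t(n)/s(n)` exists with
`0 < c(1)/l(1) ≤ κ₁ λ' < 1 − κ₁ < 1/2`, and `κ₁' = lim_n s(n)/(r(n) − t(n))` exists with
`κ₁' = κ₁/(1 − κ₁ λ')`. -/
theorem stmt_13 (l c : ℕ → ℕ) (hc : ∀ n, 1 ≤ n → 1 ≤ c n)
    (hl : ∀ n, 1 ≤ n → 2 * c n + 1 ≤ l n)
    (d : ℕ → ℕ) (hd : ∀ n, d n = l n - c n)
    (r s : ℕ → ℕ)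
    (hr : ∀ n, r n = ∏ k ∈ Finset.Icc 1 n, l k)
    (hs : ∀ n, s n = ∏ k ∈ Finset.Icc 1 n, d k)
    (t : ℕ → ℤ) (ht0 : t 0 = 0)
    (ht : ∀ n, t (n + 1) = (d (n + 1) : ℤ) * t n + (c (n + 1) : ℤ) * ((r n : ℤ) - t n))
    (κ₁ : ℝ)
    (hκ₁ : Tendsto (fun n => (s n : ℝ) / (r n : ℝ)) atTop (nhds κ₁))
    (hhalf : κ₁ > 1 / 2) :
    ∃ lam' : ℝ,
      Tendsto (fun n => (t n : ℝ) / (s n : ℝ)) atTop (nhds lam') ∧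
      0 < (c 1 : ℝ) / (l 1 : ℝ) ∧
      (c 1 : ℝ) / (l 1 : ℝ) ≤ κ₁ * lam' ∧
      κ₁ * lam' < 1 - κ₁ ∧
      1 - κ₁ < 1 / 2 ∧
      Tendsto (fun n => (s n : ℝ) / ((r n : ℝ) - (t n : ℝ))) atTop
        (nhds (κ₁ / (1 - κ₁ * lam'))) := by
  -- basic ℕ facts
  have hc1 : 1 ≤ c 1 := hc 1 le_rfl
  have hc2 : 1 ≤ c 2 := hc 2 (by norm_num)
  have hl1 : 2 * c 1 + 1 ≤ l 1 := hl 1 le_rfl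
  have hlcd : ∀ n, 1 ≤ n → l n = d n + c n := by
    intro n hn; have h1 := hl n hn; rw [hd]; omega
  have hdge : ∀ n, 1 ≤ n → c n + 1 ≤ d n := by
    intro n hn; have h1 := hl n hn; have h2 := hc n hn; rw [hd]; omega
  have hr0 : r 0 = 1 := by rw [hr]; simp
  have hs0 : s 0 = 1 := by rw [hs]; simp
  have hrsucc : ∀ n, r (n + 1) = r n * l (n + 1) := by
    intro n
    rw [hr, hr, Finset.prod_Icc_succ_top (Nat.le_add_left 1 n)]
  have hssucc : ∀ n, s (n + 1) = s n * d (n + 1) := by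
    intro n
    rw [hs, hs, Finset.prod_Icc_succ_top (Nat.le_add_left 1 n)]
  have hspos : ∀ n, 1 ≤ s n := by
    intro n; induction n with
    | zero => omega
    | succ n ih =>
      rw [hssucc]
      have h1 : 1 ≤ d (n + 1) := by have := hdge (n + 1) (by omega); omega
      calc 1 = 1 * 1 := by norm_num
        _ ≤ s n * d (n + 1) := Nat.mul_le_mul ih h1
  have hrpos : ∀ n, 1 ≤ r n := by
    intro n; induction n with
    | zero => omega
    | succ n ih =>
      rw [hrsucc]
      have h1 : 1 ≤ l (n + 1) := by have := hl (n + 1) (by omega); omega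
      calc 1 = 1 * 1 := by norm_num
        _ ≤ r n * l (n + 1) := Nat.mul_le_mul ih h1
  -- key integer induction: t ≥ 0 and t + s ≤ r
  have key : ∀ n, 0 ≤ t n ∧ t n + (s n : ℤ) ≤ (r n : ℤ) := by
    intro n; induction n with
    | zero => rw [ht0, hr0, hs0]; norm_num
    | succ n ih =>
      obtain ⟨h1, h2⟩ := ih
      have hD : (1 : ℤ) ≤ (d (n + 1) : ℤ) := by
        have h := hdge (n + 1) (by omega)
        have h2 : 1 ≤ d (n + 1) := by omega
        exact_mod_cast h2
      have hC : (0 : ℤ) ≤ (c (n + 1) : ℤ) := Int.natCast_nonneg _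
      have hL : (l (n + 1) : ℤ) = (d (n + 1) : ℤ) + (c (n + 1) : ℤ) := by
        have := hlcd (n + 1) (by omega); exact_mod_cast this
      have hsZ : (1 : ℤ) ≤ (s n : ℤ) := by exact_mod_cast hspos n
      have hrZ : (r (n + 1) : ℤ) = (r n : ℤ) * (l (n + 1) : ℤ) := by
        exact_mod_cast congrArg (Nat.cast : ℕ → ℤ) (hrsucc n)
      have hsZ' : (s (n + 1) : ℤ) = (s n : ℤ) * (d (n + 1) : ℤ) := by
        exact_mod_cast congrArg (Nat.cast : ℕ → ℤ) (hssucc n)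
      constructor
      · rw [ht]
        have e1 : (0 : ℤ) ≤ (d (n + 1) : ℤ) * t n := mul_nonneg (by linarith) h1
        have e2 : (0 : ℤ) ≤ (c (n + 1) : ℤ) * ((r n : ℤ) - t n) :=
          mul_nonneg hC (by linarith)
        linarith
      · rw [ht, hrZ, hsZ', hL]
        nlinarith [mul_nonneg (by linarith : (0:ℤ) ≤ (d (n+1) : ℤ))
            (by linarith : (0:ℤ) ≤ (r n : ℤ) - t n - (s n : ℤ)),
          mul_nonneg hC h1]
  have htnn : ∀ n, 0 ≤ t n := fun n => (key n).1
  have hts : ∀ n, t n + (s n : ℤ) ≤ (r n : ℤ) := fun n => (key n).2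
  -- t 1 = c 1
  have ht1 : t 1 = (c 1 : ℤ) := by
    have := ht 0; rw [ht0, hr0] at this; simpa using this
  -- Fact C : c 1 * r n ≤ l 1 * t n for n ≥ 1
  have factC : ∀ n, 1 ≤ n → (c 1 : ℤ) * (r n : ℤ) ≤ (l 1 : ℤ) * t n := by
    intro n hn
    induction n, hn using Nat.le_induction with
    | base =>
      have hr1 : (r 1 : ℤ) = (l 1 : ℤ) := by
        have := hrsucc 0; rw [hr0] at this; exact_mod_cast this.trans (one_mul _)
      rw [ht1, hr1]; ring_nf; rfl
    | succ n hn ih =>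
      have hD : (c (n + 1) : ℤ) + 1 ≤ (d (n + 1) : ℤ) := by
        exact_mod_cast hdge (n + 1) (by omega)
      have hC : (0 : ℤ) ≤ (c (n + 1) : ℤ) := Int.natCast_nonneg _
      have hL : (l (n + 1) : ℤ) = (d (n + 1) : ℤ) + (c (n + 1) : ℤ) := by
        have := hlcd (n + 1) (by omega); exact_mod_cast this
      have hrZ : (r (n + 1) : ℤ) = (r n : ℤ) * (l (n + 1) : ℤ) := by
        exact_mod_cast congrArg (Nat.cast : ℕ → ℤ) (hrsucc n)
      have hl1Z : 2 * (c 1 : ℤ) + 1 ≤ (l 1 : ℤ) := by exact_mod_cast hl1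
      have hc1Z : (1 : ℤ) ≤ (c 1 : ℤ) := by exact_mod_cast hc1
      have hrnn : (0 : ℤ) ≤ (r n : ℤ) := Int.natCast_nonneg _
      rw [ht, hrZ, hL]
      nlinarith [mul_nonneg (by linarith : (0:ℤ) ≤ (d (n+1):ℤ) - (c (n+1):ℤ))
          (by linarith : (0:ℤ) ≤ (l 1 : ℤ) * t n - (c 1 : ℤ) * (r n : ℤ)),
        mul_nonneg (mul_nonneg hC (by linarith : (0:ℤ) ≤ (l 1:ℤ) - 2 * (c 1:ℤ))) hrnn]
  -- Fact D : (d1 d2 + c1 c2) * s n ≤ d1 d2 * (r n - t n) for n ≥ 2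
  have factD : ∀ n, 2 ≤ n →
      ((d 1 : ℤ) * (d 2 : ℤ) + (c 1 : ℤ) * (c 2 : ℤ)) * (s n : ℤ)
        ≤ (d 1 : ℤ) * (d 2 : ℤ) * ((r n : ℤ) - t n) := by
    intro n hn
    induction n, hn using Nat.le_induction with
    | base =>
      have hr1 : (r 1 : ℤ) = (l 1 : ℤ) := by
        have := hrsucc 0; rw [hr0] at this; exact_mod_cast this.trans (one_mul _)
      have hs1 : (s 1 : ℤ) = (d 1 : ℤ) := by
        have := hssucc 0; rw [hs0] at this; exact_mod_cast this.trans (one_mul _)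
      have ht2 : t 2 = (d 2 : ℤ) * (c 1 : ℤ) + (c 2 : ℤ) * ((l 1 : ℤ) - (c 1 : ℤ)) := by
        have := ht 1; rw [ht1, hr1] at this; exact this
      have hr2 : (r 2 : ℤ) = (l 1 : ℤ) * (l 2 : ℤ) := by
        have := hrsucc 1
        have : (r 2 : ℤ) = (r 1 : ℤ) * (l 2 : ℤ) := by exact_mod_cast congrArg (Nat.cast : ℕ → ℤ) this
        rw [this, hr1]
      have hs2 : (s 2 : ℤ) = (d 1 : ℤ) * (d 2 : ℤ) := by
        have h := hssucc 1
        have : (s 2 : ℤ) = (s 1 : ℤ) * (d 2 : ℤ) := by exact_mod_cast congrArg (Nat.cast : ℕ → ℤ) h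
        rw [this, hs1]
      have hL1 : (l 1 : ℤ) = (d 1 : ℤ) + (c 1 : ℤ) := by
        have := hlcd 1 le_rfl; exact_mod_cast this
      have hL2 : (l 2 : ℤ) = (d 2 : ℤ) + (c 2 : ℤ) := by
        have := hlcd 2 (by norm_num); exact_mod_cast this
      rw [ht2, hr2, hs2, hL1, hL2]; exact le_of_eq (by ring)
    | succ n hn ih =>
      have hD : (1 : ℤ) ≤ (d (n + 1) : ℤ) := by
        have h := hdge (n + 1) (by omega)
        have h2 : 1 ≤ d (n + 1) := by omega
        exact_mod_cast h2
      have hC : (0 : ℤ) ≤ (c (n + 1) : ℤ) := Int.natCast_nonneg _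
      have hL : (l (n + 1) : ℤ) = (d (n + 1) : ℤ) + (c (n + 1) : ℤ) := by
        have := hlcd (n + 1) (by omega); exact_mod_cast this
      have hrZ : (r (n + 1) : ℤ) = (r n : ℤ) * (l (n + 1) : ℤ) := by
        exact_mod_cast congrArg (Nat.cast : ℕ → ℤ) (hrsucc n)
      have hsZ : (s (n + 1) : ℤ) = (s n : ℤ) * (d (n + 1) : ℤ) := by
        exact_mod_cast congrArg (Nat.cast : ℕ → ℤ) (hssucc n)
      have hd1 : (1 : ℤ) ≤ (d 1 : ℤ) := by
        have h := hdge 1 le_rfl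
        have h2 : 1 ≤ d 1 := by omega
        exact_mod_cast h2
      have hd2 : (1 : ℤ) ≤ (d 2 : ℤ) := by
        have h := hdge 2 (by norm_num)
        have h2 : 1 ≤ d 2 := by omega
        exact_mod_cast h2
      have hint1 : (0:ℤ) ≤ (d (n+1):ℤ) * ((d 1 : ℤ) * (d 2 : ℤ) * ((r n : ℤ) - t n)
            - ((d 1 : ℤ) * (d 2 : ℤ) + (c 1 : ℤ) * (c 2 : ℤ)) * (s n : ℤ)) :=
        mul_nonneg (by linarith) (by linarith [ih])
      have hint2 : (0:ℤ) ≤ (d 1:ℤ) * (d 2:ℤ) * (c (n+1):ℤ) * t n :=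
        mul_nonneg (mul_nonneg (mul_nonneg (by linarith) (by linarith)) hC) (htnn n)
      rw [ht, hrZ, hsZ, hL]
      nlinarith [hint1, hint2]
  -- real positivity
  have hsR : ∀ n, (0 : ℝ) < (s n : ℝ) := fun n => by
    have := hspos n; positivity
  have hrR : ∀ n, (0 : ℝ) < (r n : ℝ) := fun n => by
    have := hrpos n; positivity
  have htR : ∀ n, (0 : ℝ) ≤ (t n : ℝ) := fun n => by exact_mod_cast htnn n
  have htsR : ∀ n, (t n : ℝ) + (s n : ℝ) ≤ (r n : ℝ) := fun n => by exact_mod_cast hts n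
  -- s/r antitone, hence κ₁ ≤ s n / r n
  have hanti : Antitone (fun n => (s n : ℝ) / (r n : ℝ)) := by
    apply antitone_nat_of_succ_le
    intro n
    rw [div_le_div_iff₀ (hrR (n + 1)) (hrR n)]
    have h1 : s (n + 1) * r n ≤ s n * r (n + 1) := by
      rw [hssucc, hrsucc]
      have hdl : d (n + 1) ≤ l (n + 1) := by
        have := hlcd (n + 1) (by omega); omega
      calc s n * d (n + 1) * r n ≤ s n * l (n + 1) * r n := by
            exact Nat.mul_le_mul_right _ (Nat.mul_le_mul_left _ hdl)
        _ = s n * (r n * l (n + 1)) := by ring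
    exact_mod_cast h1
  have hκle : ∀ n, κ₁ ≤ (s n : ℝ) / (r n : ℝ) := by
    intro n
    exact le_of_tendsto hκ₁ (eventually_atTop.2 ⟨n, fun m hm => hanti hm⟩)
  have hκpos : (0 : ℝ) < κ₁ := by linarith
  -- r n < 2 s n over ℝ
  have hr2s : ∀ n, (r n : ℝ) < 2 * (s n : ℝ) := by
    intro n
    have h1 := hκle n
    have h2 : (1 : ℝ) / 2 < (s n : ℝ) / (r n : ℝ) := lt_of_lt_of_le hhalf h1
    rw [div_lt_div_iff₀ (by norm_num) (hrR n)] at h2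
    linarith
  -- F = t/s monotone and bounded by 1
  set F : ℕ → ℝ := fun n => (t n : ℝ) / (s n : ℝ) with hF
  have hFmono : Monotone F := by
    apply monotone_nat_of_le_succ
    intro n
    have hsZ : (s (n + 1) : ℤ) = (s n : ℤ) * (d (n + 1) : ℤ) := by
      exact_mod_cast congrArg (Nat.cast : ℕ → ℤ) (hssucc n)
    have hkey : t n * (s (n + 1) : ℤ) ≤ t (n + 1) * (s n : ℤ) := by
      rw [ht, hsZ]
      have hC : (0 : ℤ) ≤ (c (n + 1) : ℤ) := Int.natCast_nonneg _
      have h1 : (0 : ℤ) ≤ (r n : ℤ) - t n := by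
        have := hts n; have := hspos n
        have hsZ' : (1 : ℤ) ≤ (s n : ℤ) := by exact_mod_cast hspos n
        linarith [hts n]
      have hsnn : (0 : ℤ) ≤ (s n : ℤ) := Int.natCast_nonneg _
      nlinarith [mul_nonneg (mul_nonneg hC h1) hsnn]
    show (t n : ℝ) / (s n : ℝ) ≤ (t (n + 1) : ℝ) / (s (n + 1) : ℝ)
    rw [div_le_div_iff₀ (hsR n) (hsR (n + 1))]
    exact_mod_cast hkey
  have hFbdd : ∀ n, F n ≤ 1 := by
    intro n
    have h1 : (t n : ℝ) ≤ (s n : ℝ) := by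
      have := htsR n; have := hr2s n; linarith
    rw [hF]
    exact div_le_one_of_le₀ h1 (hsR n).le
  set lam' := ⨆ n, F n with hlam
  have hFt : Tendsto F atTop (nhds lam') :=
    tendsto_atTop_ciSup hFmono ⟨1, by rintro x ⟨n, rfl⟩; exact hFbdd n⟩
  -- X = t/r tends to lam' * κ₁
  have hXeq : ∀ n, F n * ((s n : ℝ) / (r n : ℝ)) = (t n : ℝ) / (r n : ℝ) := by
    intro n
    rw [hF]
    rw [div_mul_div_comm, mul_comm ((s n : ℝ)) ((r n : ℝ)), mul_div_mul_right _ _ (hsR n).ne']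
  have hX : Tendsto (fun n => (t n : ℝ) / (r n : ℝ)) atTop (nhds (lam' * κ₁)) := by
    have := hFt.mul hκ₁
    refine this.congr hXeq
  -- lower bound
  have hlow : (c 1 : ℝ) / (l 1 : ℝ) ≤ lam' * κ₁ := by
    refine ge_of_tendsto hX ?_
    refine eventually_atTop.2 ⟨1, fun n hn => ?_⟩
    have hl1R : (0 : ℝ) < (l 1 : ℝ) := by
      have := hl1; have := hc1
      have : 1 ≤ l 1 := by omega
      positivity
    rw [div_le_div_iff₀ hl1R (hrR n)]
    have := factC n hn
    have : (c 1 : ℝ) * (r n : ℝ) ≤ (l 1 : ℝ) * (t n : ℝ) := by exact_mod_cast this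
    linarith
  -- strict upper bound: κ₁ < 1 - lam' * κ₁
  have hXc : Tendsto (fun n => 1 - (t n : ℝ) / (r n : ℝ)) atTop (nhds (1 - lam' * κ₁)) :=
    tendsto_const_nhds.sub hX
  have hd1R : (1 : ℝ) ≤ (d 1 : ℝ) := by
    have := hdge 1 le_rfl; have : 1 ≤ d 1 := by omega
    exact_mod_cast this
  have hd2R : (1 : ℝ) ≤ (d 2 : ℝ) := by
    have := hdge 2 (by norm_num); have : 1 ≤ d 2 := by omega
    exact_mod_cast this
  have hc1R : (1 : ℝ) ≤ (c 1 : ℝ) := by exact_mod_cast hc1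
  have hc2R : (1 : ℝ) ≤ (c 2 : ℝ) := by exact_mod_cast hc2
  set K : ℝ := (d 1 : ℝ) * (d 2 : ℝ) with hK
  set M : ℝ := (d 1 : ℝ) * (d 2 : ℝ) + (c 1 : ℝ) * (c 2 : ℝ) with hM
  have hKpos : (0 : ℝ) < K := by rw [hK]; nlinarith
  have hKM : K < M := by rw [hK, hM]; nlinarith
  have hMK1 : 1 < M / K := (one_lt_div hKpos).2 hKM
  have hup' : M / K * κ₁ ≤ 1 - lam' * κ₁ := by
    refine ge_of_tendsto hXc ?_
    refine eventually_atTop.2 ⟨2, fun n hn => ?_⟩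
    have hfd := factD n hn
    have hfdR : M * (s n : ℝ) ≤ K * ((r n : ℝ) - (t n : ℝ)) := by
      rw [hM, hK]; exact_mod_cast hfd
    have h1 : M / K * κ₁ ≤ M / K * ((s n : ℝ) / (r n : ℝ)) := by
      exact mul_le_mul_of_nonneg_left (hκle n) (div_nonneg (by nlinarith) hKpos.le)
    have h2 : M / K * ((s n : ℝ) / (r n : ℝ)) ≤ ((r n : ℝ) - (t n : ℝ)) / (r n : ℝ) := by
      rw [div_mul_div_comm, div_le_div_iff₀ (mul_pos hKpos (hrR n)) (hrR n)]
      nlinarith [hrR n, (hrR n).le]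
    have h3 : ((r n : ℝ) - (t n : ℝ)) / (r n : ℝ) = 1 - (t n : ℝ) / (r n : ℝ) := by
      rw [sub_div, div_self (hrR n).ne']
    linarith [h1, h2.trans_eq h3]
  have hup : lam' * κ₁ < 1 - κ₁ := by nlinarith
  -- final limit
  have hne : (1 - lam' * κ₁) ≠ 0 := by nlinarith
  have hfinal : Tendsto (fun n => (s n : ℝ) / ((r n : ℝ) - (t n : ℝ))) atTop
      (nhds (κ₁ / (1 - lam' * κ₁))) := by
    have := hκ₁.div hXc hne
    refine this.congr fun n => ?_
    have hrtpos : (0 : ℝ) < (r n : ℝ) - (t n : ℝ) := by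
      have h1 := htsR n; have h2 := hsR n; linarith
    have h3 : (1 : ℝ) - (t n : ℝ) / (r n : ℝ) = ((r n : ℝ) - (t n : ℝ)) / (r n : ℝ) := by
      rw [sub_div, div_self (hrR n).ne']
    show (s n : ℝ) / (r n : ℝ) / (1 - (t n : ℝ) / (r n : ℝ))
        = (s n : ℝ) / ((r n : ℝ) - (t n : ℝ))
    rw [h3, div_div_div_cancel_right₀ (hrR n).ne']
  refine ⟨lam', hFt, ?_, ?_, ?_, by linarith, ?_⟩
  · have hl1R : (0 : ℝ) < (l 1 : ℝ) := by
      have : 1 ≤ l 1 := by omega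
      exact_mod_cast Nat.cast_pos.2 this
    positivity
  · rw [mul_comm]; exact hlow
  · rw [mul_comm]; exact hup
  · rw [mul_comm κ₁ lam']; exact hfinal
end

section
/- In the setting of CTXB, assume κ₁ > 1/2. Then the limit κ₁' = lim_{n→∞} s(n)/(r(n) − t(n)) exists and is strictly positive, and it satisfies κ₁ < κ₁' < 2κ₁ and κ₁' − κ₁ < min(κ₁, κ₁²/(κ₁' − κ₁)). -/
open Filter

set_option maxHeartbeats 1000000 in
/-- setting CTXB: if `κ₁ > 1/2`, then `κ₁' = lim_n s(n)/(r(n) − t(n))`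
exists, is strictly positive, and satisfies `κ₁ < κ₁' < 2κ₁` and
`κ₁' − κ₁ < min(κ₁, κ₁²/(κ₁' − κ₁))`. -/
theorem stmt_14 (l c : ℕ → ℕ) (hc : ∀ n, 1 ≤ n → 1 ≤ c n)
    (hl : ∀ n, 1 ≤ n → 2 * c n + 1 ≤ l n)
    (d : ℕ → ℕ) (hd : ∀ n, d n = l n - c n)
    (r s : ℕ → ℕ)
    (hr : ∀ n, r n = ∏ k ∈ Finset.Icc 1 n, l k)
    (hs : ∀ n, s n = ∏ k ∈ Finset.Icc 1 n, d k)
    (t : ℕ → ℤ) (ht0 : t 0 = 0)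
    (ht : ∀ n, t (n + 1) = (d (n + 1) : ℤ) * t n + (c (n + 1) : ℤ) * ((r n : ℤ) - t n))
    (κ₁ : ℝ)
    (hκ₁ : Tendsto (fun n => (s n : ℝ) / (r n : ℝ)) atTop (nhds κ₁))
    (hhalf : κ₁ > 1 / 2) :
    ∃ κ₁' : ℝ,
      Tendsto (fun n => (s n : ℝ) / ((r n : ℝ) - (t n : ℝ))) atTop (nhds κ₁') ∧
      0 < κ₁' ∧ κ₁ < κ₁' ∧ κ₁' < 2 * κ₁ ∧
      κ₁' - κ₁ < min κ₁ (κ₁ ^ 2 / (κ₁' - κ₁)) := by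
  have hκpos : 0 < κ₁ := by linarith
  -- basic facts about l, c, d
  have hcl : ∀ k, 1 ≤ k → c k ≤ l k := fun k hk => by have := hl k hk; omega
  have hl3 : ∀ k, 1 ≤ k → 3 ≤ l k := fun k hk => by
    have := hl k hk; have := hc k hk; omega
  have hd1 : ∀ k, 1 ≤ k → 1 ≤ d k := fun k hk => by
    have := hl k hk; have := hc k hk; rw [hd]; omega
  have hdl : ∀ k, d k ≤ l k := fun k => by rw [hd]; omega
  -- positivity of r, s
  have hr0 : r 0 = 1 := by
    rw [hr 0, Finset.Icc_eq_empty (by omega), Finset.prod_empty]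
  have hrsucc : ∀ n, r (n + 1) = r n * l (n + 1) := fun n => by
    rw [hr (n + 1), hr n, Finset.prod_Icc_succ_top (by omega)]
  have hssucc : ∀ n, s (n + 1) = s n * d (n + 1) := fun n => by
    rw [hs (n + 1), hs n, Finset.prod_Icc_succ_top (by omega)]
  have hrpos : ∀ n, 0 < r n := fun n => by
    rw [hr n]; exact Finset.prod_pos fun k hk => by
      have := hl3 k (Finset.mem_Icc.mp hk).1; omega
  have hspos : ∀ n, 0 < s n := fun n => by
    rw [hs n]; exact Finset.prod_pos fun k hk => hd1 k (Finset.mem_Icc.mp hk).1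
  -- the sequence p n = r n − 2 t n
  set p : ℕ → ℤ := fun n => (r n : ℤ) - 2 * t n with hp
  have hp0 : p 0 = 1 := by simp [hp, ht0, hr0]
  have hpsucc : ∀ n, p (n + 1) = ((l (n + 1) : ℤ) - 2 * c (n + 1)) * p n := by
    intro n
    have hdc : (d (n + 1) : ℤ) = (l (n + 1) : ℤ) - c (n + 1) := by
      rw [hd]; push_cast [hcl (n + 1) (by omega)]; ring
    simp only [hp, ht n, hrsucc n, hdc]
    push_cast
    ring
  have hppos : ∀ n, 1 ≤ p n := by
    intro n
    induction n with
    | zero => rw [hp0]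
    | succ m ih =>
        rw [hpsucc m]
        have h1 : (1 : ℤ) ≤ (l (m + 1) : ℤ) - 2 * c (m + 1) := by
          have := hl (m + 1) (by omega); push_cast; omega
        nlinarith
  -- real-valued sequences
  set A : ℕ → ℝ := fun n => (s n : ℝ) / (r n : ℝ) with hA
  set B : ℕ → ℝ := fun n => (p n : ℝ) / (r n : ℝ) with hB
  have hrR : ∀ n, (0 : ℝ) < (r n : ℝ) := fun n => by exact_mod_cast hrpos n
  have hsR : ∀ n, (0 : ℝ) < (s n : ℝ) := fun n => by exact_mod_cast hspos n
  have hpR : ∀ n, (0 : ℝ) < (p n : ℝ) := fun n => by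
    have := hppos n; exact_mod_cast lt_of_lt_of_le one_pos (by exact_mod_cast this)
  have hApos : ∀ n, 0 < A n := fun n => div_pos (hsR n) (hrR n)
  have hBpos : ∀ n, 0 < B n := fun n => div_pos (hpR n) (hrR n)
  have hAstep : ∀ n, A (n + 1) = A n * ((d (n + 1) : ℝ) / (l (n + 1) : ℝ)) := by
    intro n
    have hl0 : ((l (n + 1) : ℝ)) ≠ 0 := by
      have := hl3 (n + 1) (by omega); positivity
    simp only [hA, hssucc n, hrsucc n]
    push_cast
    rw [div_mul_div_comm]
  have hBstep : ∀ n, B (n + 1) = B n * (((l (n + 1) : ℝ) - 2 * c (n + 1)) / (l (n + 1) : ℝ)) := by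
    intro n
    have hl0 : ((l (n + 1) : ℝ)) ≠ 0 := by
      have := hl3 (n + 1) (by omega); positivity
    simp only [hB, hpsucc n, hrsucc n]
    push_cast
    rw [div_mul_div_comm]
    ring
  have hAanti : Antitone A := by
    apply antitone_nat_of_succ_le
    intro n
    rw [hAstep n]
    have h1 : (d (n + 1) : ℝ) / (l (n + 1) : ℝ) ≤ 1 := by
      apply div_le_one_of_le₀
      · exact_mod_cast hdl (n + 1)
      · positivity
    nlinarith [hApos n]
  have hAge : ∀ n, κ₁ ≤ A n := by
    intro n
    refine le_of_tendsto hκ₁ ?_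
    filter_upwards [eventually_ge_atTop n] with m hm
    exact hAanti hm
  have hBanti : Antitone B := by
    apply antitone_nat_of_succ_le
    intro n
    rw [hBstep n]
    have hlp : (0 : ℝ) < (l (n + 1) : ℝ) := by
      have := hl3 (n + 1) (by omega); positivity
    have h1 : ((l (n + 1) : ℝ) - 2 * c (n + 1)) / (l (n + 1) : ℝ) ≤ 1 := by
      apply div_le_one_of_le₀
      · have : (0 : ℝ) ≤ (c (n + 1) : ℝ) := by positivity
        linarith
      · positivity
    nlinarith [hBpos n]
  have hBbdd : BddBelow (Set.range B) := ⟨0, fun x ⟨n, hn⟩ => hn ▸ (hBpos n).le⟩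
  obtain ⟨β, hBlim⟩ : ∃ β, Tendsto B atTop (nhds β) :=
    ⟨_, tendsto_atTop_ciInf hBanti hBbdd⟩
  have hβlt1 : β < 1 := by
    have h1 : β ≤ B 1 := by
      refine le_of_tendsto hBlim ?_
      filter_upwards [eventually_ge_atTop 1] with m hm
      exact hBanti hm
    have hB1 : B 1 < 1 := by
      have hp1 : p 1 = (l 1 : ℤ) - 2 * c 1 := by rw [hpsucc 0, hp0, mul_one]
      have hr1 : r 1 = l 1 := by rw [hrsucc 0, hr0, one_mul]
      rw [hB]
      simp only [hp1, hr1]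
      rw [div_lt_one (by have := hl3 1 le_rfl; push_cast; positivity)]
      have := hc 1 le_rfl
      push_cast
      have : (1 : ℝ) ≤ (c 1 : ℝ) := by exact_mod_cast this
      linarith
    linarith
  -- β > 0
  have hAlim1 : Tendsto (fun n => A (n + 1) / A n) atTop (nhds 1) := by
    have h1 : Tendsto (fun n => A (n + 1)) atTop (nhds κ₁) :=
      hκ₁.comp (tendsto_add_atTop_nat 1)
    have := h1.div hκ₁ (ne_of_gt hκpos)
    rwa [div_self (ne_of_gt hκpos)] at this
  have hev : ∀ᶠ n in atTop, (3 : ℝ) / 4 ≤ A (n + 1) / A n :=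
    hAlim1.eventually (eventually_ge_nhds (by norm_num))
  obtain ⟨N, hN⟩ := hev.exists_forall_of_atTop
  -- for n ≥ N, the quantity x = c/l satisfies 0 ≤ x ≤ 1/4
  have hx : ∀ n, N ≤ n →
      (c (n + 1) : ℝ) / (l (n + 1) : ℝ) ≤ 1 / 4 ∧
      (d (n + 1) : ℝ) / (l (n + 1) : ℝ) = 1 - (c (n + 1) : ℝ) / (l (n + 1) : ℝ) := by
    intro n hn
    have hlp : (0 : ℝ) < (l (n + 1) : ℝ) := by
      have h3 : (3 : ℝ) ≤ (l (n + 1) : ℝ) := by exact_mod_cast hl3 (n + 1) (by omega)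
      linarith
    have hdc : (d (n + 1) : ℝ) = (l (n + 1) : ℝ) - (c (n + 1) : ℝ) := by
      rw [hd]; push_cast [hcl (n + 1) (by omega)]; ring
    have hq : (3 : ℝ) / 4 ≤ (d (n + 1) : ℝ) / (l (n + 1) : ℝ) := by
      have h1 := hN n hn
      rw [hAstep n, mul_comm, mul_div_assoc, div_self (ne_of_gt (hApos n)), mul_one] at h1
      exact h1
    constructor
    · rw [hdc, sub_div, div_self (ne_of_gt hlp)] at hq
      linarith
    · rw [hdc, sub_div, div_self (ne_of_gt hlp)]
  -- key induction : B n * A N ^ 4 ≥ B N * A n ^ 4 for n ≥ N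
  have hkey : ∀ n, N ≤ n → B N * A n ^ 4 ≤ B n * A N ^ 4 := by
    intro n hn
    induction n, hn using Nat.le_induction with
    | base => exact le_rfl
    | succ m hm ih =>
        obtain ⟨hx1, hx2⟩ := hx m hm
        set x : ℝ := (c (m + 1) : ℝ) / (l (m + 1) : ℝ) with hxdef
        have hlp : (0 : ℝ) < (l (m + 1) : ℝ) := by
          have h3 : (3 : ℝ) ≤ (l (m + 1) : ℝ) := by exact_mod_cast hl3 (m + 1) (by omega)
          linarith
        have hx0 : 0 ≤ x := by positivity
        have hAm : A (m + 1) = A m * (1 - x) := by rw [hAstep m, hx2]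
        have hBm : B (m + 1) = B m * (1 - 2 * x) := by
          rw [hBstep m]
          congr 1
          rw [sub_div, div_self (ne_of_gt hlp), hxdef]
          ring
        have hineq : (1 - x) ^ 4 ≤ 1 - 2 * x := by
          nlinarith [mul_nonneg hx0 (by linarith : (0:ℝ) ≤ 2 - 6 * x),
            mul_nonneg (mul_nonneg (mul_nonneg hx0 hx0) hx0) (by linarith : (0:ℝ) ≤ 4 - x)]
        rw [hAm, hBm]
        have h1 : 0 ≤ B N := (hBpos N).le
        have h2 : 0 ≤ A m ^ 4 := by positivity
        have h3 : 0 ≤ B m := (hBpos m).le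
        have h4 : 0 ≤ A N ^ 4 := by positivity
        calc B N * (A m * (1 - x)) ^ 4 = B N * A m ^ 4 * (1 - x) ^ 4 := by ring
          _ ≤ B N * A m ^ 4 * (1 - 2 * x) := by
              have : 0 ≤ B N * A m ^ 4 := by positivity
              nlinarith
          _ ≤ B m * A N ^ 4 * (1 - 2 * x) := by nlinarith
          _ = B m * (1 - 2 * x) * A N ^ 4 := by ring
  have hβpos : 0 < β := by
    have hcst : 0 < B N * κ₁ ^ 4 / A N ^ 4 := by
      have := hBpos N; have := hApos N; positivity
    refine lt_of_lt_of_le hcst (ge_of_tendsto hBlim ?_)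
    filter_upwards [eventually_ge_atTop N] with n hn
    have h1 := hkey n hn
    have h2 : κ₁ ^ 4 ≤ A n ^ 4 := pow_le_pow_left₀ hκpos.le (hAge n) 4
    have hAN4 : 0 < A N ^ 4 := by have := hApos N; positivity
    rw [div_le_iff₀ hAN4]
    nlinarith [ (hBpos N).le ]
  -- the limit κ₁'
  have h1β : (0 : ℝ) < 1 + β := by linarith
  refine ⟨2 * κ₁ / (1 + β), ?_, ?_, ?_, ?_, ?_⟩
  · have heq : ∀ n, (s n : ℝ) / ((r n : ℝ) - (t n : ℝ)) = 2 * A n / (1 + B n) := by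
      intro n
      have hpt : (p n : ℝ) = (r n : ℝ) - 2 * (t n : ℝ) := by
        rw [hp]; push_cast; ring
      have hrt : (r n : ℝ) - (t n : ℝ) = ((r n : ℝ) + (p n : ℝ)) / 2 := by
        rw [hpt]; ring
      rw [hrt, hA, hB]
      have h1 : (r n : ℝ) ≠ 0 := ne_of_gt (hrR n)
      have h2 : (r n : ℝ) + (p n : ℝ) ≠ 0 := by
        have := hpR n; have := hrR n; positivity
      field_simp
    have h3 := (hκ₁.const_mul 2).div (tendsto_const_nhds.add hBlim) (ne_of_gt h1β)
    exact Tendsto.congr (fun n => (heq n).symm) h3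
  · positivity
  · rw [lt_div_iff₀ h1β]; nlinarith
  · rw [div_lt_iff₀ h1β]; nlinarith
  · have hlt2 : 2 * κ₁ / (1 + β) < 2 * κ₁ := by
      rw [div_lt_iff₀ h1β]; nlinarith
    have hgt : κ₁ < 2 * κ₁ / (1 + β) := by
      rw [lt_div_iff₀ h1β]; nlinarith
    refine lt_min (by linarith) ?_
    rw [lt_div_iff₀ (by linarith)]
    nlinarith
end

section
/- Let κ ∈ (0, 1) and let l₀ be a positive integer with 1 − 1/l₀ > κ. Then there exists a sequence l : ℤ_{>0} → ℤ_{>0} of positive integers such that: (1) the partial products ∏_{n=1}^{N} (1 − 1/l(n)) converge to κ as N → ∞; (2) the sequence (l(n)) is nondecreasing; (3) l(n) ≥ l₀ for all n; (4) l(1) = l₀; (5) l(n) → ∞ as n → ∞; and (6) for every positive integer k there exist n₁, n₂ ∈ ℤ_{>0} such that k divides l(n₁) and k divides l(n₂) − 2. -/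
open Filter

open Finset
/-- modulus schedule: at `n = 4^k` require divisibility by `k` (residue 0),
at `n = 2·4^k` residue 2 mod `k`; otherwise the trivial modulus 1. -/
def mo (n : ℕ) : ℕ :=
  if 4 ^ Nat.log 4 n = n ∧ 1 ≤ Nat.log 4 n then Nat.log 4 n
  else if 2 * 4 ^ Nat.log 4 (n / 2) = n ∧ 1 ≤ Nat.log 4 (n / 2) then Nat.log 4 (n / 2)
  else 1

/-- residue schedule. -/
def re (n : ℕ) : ℕ :=
  if 4 ^ Nat.log 4 n = n ∧ 1 ≤ Nat.log 4 n then 0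
  else if 2 * 4 ^ Nat.log 4 (n / 2) = n ∧ 1 ≤ Nat.log 4 (n / 2) then 2
  else 0

lemma mo_pos (n : ℕ) : 1 ≤ mo n := by
  unfold mo; split_ifs with h1 h2
  · exact h1.2
  · exact h2.2
  · exact le_rfl

lemma mo_pow4 {k : ℕ} (hk : 1 ≤ k) : mo (4 ^ k) = k ∧ re (4 ^ k) = 0 := by
  have hl : Nat.log 4 (4 ^ k) = k := Nat.log_pow (by norm_num) k
  have hc : 4 ^ Nat.log 4 (4 ^ k) = 4 ^ k ∧ 1 ≤ Nat.log 4 (4 ^ k) := by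
    rw [hl]; exact ⟨rfl, hk⟩
  constructor
  · unfold mo; rw [if_pos hc, hl]
  · unfold re; rw [if_pos hc]

lemma mo_two_mul_pow4 {k : ℕ} (hk : 1 ≤ k) : mo (2 * 4 ^ k) = k ∧ re (2 * 4 ^ k) = 2 := by
  have hl : Nat.log 4 (2 * 4 ^ k) = k := by
    apply Nat.log_eq_of_pow_le_of_lt_pow
    · nlinarith [(Nat.pow_pos (show 0 < 4 by norm_num) : 0 < 4 ^ k)]
    · rw [pow_succ]
      nlinarith [(Nat.pow_pos (show 0 < 4 by norm_num) : 0 < 4 ^ k)]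
  have hc : ¬(4 ^ Nat.log 4 (2 * 4 ^ k) = 2 * 4 ^ k ∧ 1 ≤ Nat.log 4 (2 * 4 ^ k)) := by
    rw [hl]
    rintro ⟨he, -⟩
    nlinarith [(Nat.pow_pos (show 0 < 4 by norm_num) : 0 < 4 ^ k)]
  have hd : (2 * 4 ^ k) / 2 = 4 ^ k := by omega
  have hl2 : Nat.log 4 ((2 * 4 ^ k) / 2) = k := by rw [hd, Nat.log_pow (by norm_num)]
  have hc2 : 2 * 4 ^ Nat.log 4 ((2 * 4 ^ k) / 2) = 2 * 4 ^ k ∧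
      1 ≤ Nat.log 4 ((2 * 4 ^ k) / 2) := by
    rw [hl2]; exact ⟨rfl, hk⟩
  constructor
  · unfold mo; rw [if_neg hc, if_pos hc2, hl2]
  · unfold re; rw [if_neg hc, if_pos hc2]

lemma sq_le_four_pow (k : ℕ) : k ^ 2 ≤ 4 ^ k := by
  calc k ^ 2 ≤ (2 ^ k) ^ 2 := Nat.pow_le_pow_left (Nat.lt_two_pow_self (n := k)).le 2
  _ = 4 ^ k := by rw [← pow_mul, mul_comm, pow_mul]; norm_num

/-- the total modulus sum is linearly bounded. -/
lemma sum_mo_le (N : ℕ) : ∑ i ∈ range N, mo i ≤ 9 * N := by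
  rcases Nat.eq_zero_or_pos N with rfl | hN
  · simp
  set K := Nat.log 4 N with hK
  have h4K : 4 ^ K ≤ N := Nat.pow_log_le_self 4 hN.ne'
  have hKsq : (K + 1) ^ 2 ≤ 4 * N := by
    calc (K + 1) ^ 2 ≤ 4 ^ (K + 1) := sq_le_four_pow (K + 1)
    _ = 4 * 4 ^ K := by rw [pow_succ, mul_comm]
    _ ≤ 4 * N := by omega
  have hA : (∑ i ∈ range N, if 4 ^ Nat.log 4 i = i ∧ 1 ≤ Nat.log 4 i
      then Nat.log 4 i else 0) ≤ 4 * N := by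
    rw [← Finset.sum_filter]
    have hsub : (range N).filter (fun i => 4 ^ Nat.log 4 i = i ∧ 1 ≤ Nat.log 4 i)
        ⊆ (range (K + 1)).image (fun k => 4 ^ k) := by
      intro i hi
      simp only [mem_filter, mem_range] at hi
      obtain ⟨hiN, hpow, -⟩ := hi
      refine Finset.mem_image.2 ⟨Nat.log 4 i, ?_, hpow⟩
      rw [Finset.mem_range, hK, Nat.lt_succ_iff]
      exact Nat.log_mono_right hiN.le
    calc (∑ i ∈ (range N).filter (fun i => 4 ^ Nat.log 4 i = i ∧ 1 ≤ Nat.log 4 i), Nat.log 4 i)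
        ≤ ∑ i ∈ (range (K + 1)).image (fun k => 4 ^ k), Nat.log 4 i :=
          Finset.sum_le_sum_of_subset hsub
      _ = ∑ k ∈ range (K + 1), Nat.log 4 (4 ^ k) := by
          rw [Finset.sum_image]
          intro a _ b _ hab
          exact Nat.pow_right_injective (by norm_num) hab
      _ ≤ ∑ _k ∈ range (K + 1), K := by
          apply Finset.sum_le_sum
          intro k hk
          rw [Nat.log_pow (by norm_num)]
          exact Nat.lt_succ_iff.1 (mem_range.1 hk)
      _ = (K + 1) * K := by rw [Finset.sum_const, card_range, smul_eq_mul]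
      _ ≤ 4 * N := by nlinarith
  have hB : (∑ i ∈ range N, if 2 * 4 ^ Nat.log 4 (i / 2) = i ∧ 1 ≤ Nat.log 4 (i / 2)
      then Nat.log 4 (i / 2) else 0) ≤ 4 * N := by
    rw [← Finset.sum_filter]
    have hsub : (range N).filter
        (fun i => 2 * 4 ^ Nat.log 4 (i / 2) = i ∧ 1 ≤ Nat.log 4 (i / 2))
        ⊆ (range (K + 1)).image (fun k => 2 * 4 ^ k) := by
      intro i hi
      simp only [mem_filter, mem_range] at hi
      obtain ⟨hiN, hpow, -⟩ := hi
      refine Finset.mem_image.2 ⟨Nat.log 4 (i / 2), ?_, hpow⟩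
      rw [Finset.mem_range, hK, Nat.lt_succ_iff]
      exact Nat.log_mono_right (Nat.le_of_lt (lt_of_le_of_lt (Nat.div_le_self i 2) hiN))
    calc (∑ i ∈ (range N).filter
          (fun i => 2 * 4 ^ Nat.log 4 (i / 2) = i ∧ 1 ≤ Nat.log 4 (i / 2)), Nat.log 4 (i / 2))
        ≤ ∑ i ∈ (range (K + 1)).image (fun k => 2 * 4 ^ k), Nat.log 4 (i / 2) :=
          Finset.sum_le_sum_of_subset hsub
      _ = ∑ k ∈ range (K + 1), Nat.log 4 ((2 * 4 ^ k) / 2) := by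
          rw [Finset.sum_image]
          intro a _ b _ hab
          have h4 : (4:ℕ)^a = 4^b := Nat.eq_of_mul_eq_mul_left two_pos hab
          exact Nat.pow_right_injective (by norm_num) h4
      _ ≤ ∑ _k ∈ range (K + 1), K := by
          apply Finset.sum_le_sum
          intro k hk
          have : (2 * 4 ^ k) / 2 = 4 ^ k := by omega
          rw [this, Nat.log_pow (by norm_num)]
          exact Nat.lt_succ_iff.1 (mem_range.1 hk)
      _ = (K + 1) * K := by rw [Finset.sum_const, card_range, smul_eq_mul]
      _ ≤ 4 * N := by nlinarith
  have hmo : ∀ i, mo i ≤ 1 + ((if 4 ^ Nat.log 4 i = i ∧ 1 ≤ Nat.log 4 i then Nat.log 4 i else 0)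
      + (if 2 * 4 ^ Nat.log 4 (i / 2) = i ∧ 1 ≤ Nat.log 4 (i / 2)
        then Nat.log 4 (i / 2) else 0)) := by
    intro i; unfold mo; split_ifs <;> omega
  calc ∑ i ∈ range N, mo i
      ≤ ∑ i ∈ range N, (1 + ((if 4 ^ Nat.log 4 i = i ∧ 1 ≤ Nat.log 4 i then Nat.log 4 i else 0)
      + (if 2 * 4 ^ Nat.log 4 (i / 2) = i ∧ 1 ≤ Nat.log 4 (i / 2)
        then Nat.log 4 (i / 2) else 0))) := Finset.sum_le_sum fun i _ => hmo i
    _ = N + ((∑ i ∈ range N, if 4 ^ Nat.log 4 i = i ∧ 1 ≤ Nat.log 4 i then Nat.log 4 i else 0)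
        + ∑ i ∈ range N, if 2 * 4 ^ Nat.log 4 (i / 2) = i ∧ 1 ≤ Nat.log 4 (i / 2)
          then Nat.log 4 (i / 2) else 0) := by
        rw [Finset.sum_add_distrib, Finset.sum_add_distrib, Finset.sum_const, card_range,
          smul_eq_mul, mul_one]
    _ ≤ 9 * N := by omega

/-- the candidate set at step `n`. -/
def cand (κ P : ℝ) (n prev : ℕ) : Set ℕ :=
  {m : ℕ | max prev n ≤ m ∧ (mo n : ℤ) ∣ (m : ℤ) - (re n : ℤ) ∧ κ < P * (1 - 1 / (m : ℝ))}

noncomputable def nxt (κ P : ℝ) (n prev : ℕ) : ℕ := sInf (cand κ P n prev)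

lemma cand_nonempty {κ P : ℝ} (hκ : 0 < κ) (hP : κ < P) (n prev : ℕ) :
    (cand κ P n prev).Nonempty := by
  have hP0 : 0 < P := hκ.trans hP
  have hPκ : 0 < P - κ := by linarith
  set M : ℕ := ⌈P / (P - κ)⌉₊ + max prev n + 2 with hM
  have hmo := mo_pos n
  have hMle : M ≤ mo n * M := Nat.le_mul_of_pos_left M (by omega)
  refine ⟨re n + mo n * M, by omega, by simp, ?_⟩
  set m : ℕ := re n + mo n * M with hm
  have hm1 : P / (P - κ) < (m : ℝ) := by
    have h1 : P / (P - κ) ≤ (⌈P / (P - κ)⌉₊ : ℝ) := Nat.le_ceil _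
    have h2 : (⌈P / (P - κ)⌉₊ : ℝ) < (m : ℝ) := by
      have : ⌈P / (P - κ)⌉₊ < m := by omega
      exact_mod_cast this
    linarith
  have hm0 : (0 : ℝ) < (m : ℝ) := lt_of_le_of_lt (div_nonneg hP0.le hPκ.le) hm1
  rw [div_lt_iff₀ hPκ] at hm1
  have hinv : (m : ℝ) * (1 / (m : ℝ)) = 1 := by field_simp
  nlinarith [hm1, hinv, hm0]

/-- the recursively constructed sequence: first component the matrix sizes `l`,
second component the running product. -/
noncomputable def mseq (κ : ℝ) (l₀ : ℕ) : ℕ → ℕ × ℝ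
  | 0 => (l₀, 1 - 1 / (l₀ : ℝ))
  | j + 1 =>
    (nxt κ (mseq κ l₀ j).2 (j + 2) (mseq κ l₀ j).1,
     (mseq κ l₀ j).2 * (1 - 1 / (nxt κ (mseq κ l₀ j).2 (j + 2) (mseq κ l₀ j).1 : ℝ)))

section Main

variable {κ : ℝ} {l₀ : ℕ}

lemma mseq_inv (hκ : 0 < κ) (hbase : κ < 1 - 1 / (l₀ : ℝ)) :
    ∀ j, κ < (mseq κ l₀ j).2 := by
  intro j
  induction j with
  | zero => simpa only [mseq] using hbase
  | succ j ih =>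
    have hne := cand_nonempty hκ ih (j + 2) (mseq κ l₀ j).1
    have hmem := Nat.sInf_mem hne
    simpa only [mseq, nxt] using hmem.2.2

lemma mseq_mem (hκ : 0 < κ) (hbase : κ < 1 - 1 / (l₀ : ℝ)) (j : ℕ) :
    (mseq κ l₀ (j + 1)).1 ∈ cand κ (mseq κ l₀ j).2 (j + 2) (mseq κ l₀ j).1 := by
  have hne := cand_nonempty hκ (mseq_inv hκ hbase j) (j + 2) (mseq κ l₀ j).1
  simpa only [mseq, nxt] using Nat.sInf_mem hne

lemma mseq_snd_eq (j : ℕ) :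
    (mseq κ l₀ (j + 1)).2 = (mseq κ l₀ j).2 * (1 - 1 / ((mseq κ l₀ (j + 1)).1 : ℝ)) := by
  simp only [mseq]

lemma mseq_fst_ge (hκ : 0 < κ) (hbase : κ < 1 - 1 / (l₀ : ℝ)) (j : ℕ) :
    max (mseq κ l₀ j).1 (j + 2) ≤ (mseq κ l₀ (j + 1)).1 :=
  (mseq_mem hκ hbase j).1

lemma mseq_fst_two (hκ : 0 < κ) (hbase : κ < 1 - 1 / (l₀ : ℝ)) (hl₀ : 2 ≤ l₀) (j : ℕ) :
    2 ≤ (mseq κ l₀ j).1 := by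
  cases j with
  | zero => simpa only [mseq] using hl₀
  | succ j =>
    have := mseq_fst_ge hκ hbase j
    omega

lemma mseq_fst_idx (hκ : 0 < κ) (hbase : κ < 1 - 1 / (l₀ : ℝ)) (hl₀ : 2 ≤ l₀) (j : ℕ) :
    j + 1 ≤ (mseq κ l₀ j).1 := by
  cases j with
  | zero => simp only [mseq]; omega
  | succ j =>
    have := mseq_fst_ge hκ hbase j
    omega

lemma mseq_fst_mono (hκ : 0 < κ) (hbase : κ < 1 - 1 / (l₀ : ℝ)) :
    Monotone fun j => (mseq κ l₀ j).1 := by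
  apply monotone_nat_of_le_succ
  intro j
  have := mseq_fst_ge hκ hbase j
  omega

lemma factor_pos {m : ℕ} (hm : 2 ≤ m) : 0 < 1 - 1 / (m : ℝ) := by
  have h1 : (2 : ℝ) ≤ (m : ℝ) := by exact_mod_cast hm
  have : 1 / (m : ℝ) ≤ 1 / 2 := by
    apply one_div_le_one_div_of_le <;> linarith
  linarith

lemma factor_le_one {m : ℕ} : 1 - 1 / (m : ℝ) ≤ 1 := by
  have : (0 : ℝ) ≤ 1 / (m : ℝ) := by positivity
  linarith

lemma mseq_snd_anti (hκ : 0 < κ) (hbase : κ < 1 - 1 / (l₀ : ℝ)) :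
    Antitone fun j => (mseq κ l₀ j).2 := by
  apply antitone_nat_of_succ_le
  intro j
  rw [mseq_snd_eq]
  have hpos : 0 < (mseq κ l₀ j).2 := hκ.trans (mseq_inv hκ hbase j)
  exact mul_le_of_le_one_right hpos.le factor_le_one

lemma mseq_prod (j : ℕ) :
    (mseq κ l₀ j).2 = ∏ i ∈ Icc 1 (j + 1), (1 - 1 / ((mseq κ l₀ (i - 1)).1 : ℝ)) := by
  induction j with
  | zero =>
    rw [Finset.Icc_self, Finset.prod_singleton]
    show (mseq κ l₀ 0).2 = 1 - 1 / ((mseq κ l₀ 0).1 : ℝ)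
    simp only [mseq]
  | succ j ih =>
    rw [Finset.prod_Icc_succ_top (by omega : 1 ≤ j + 2), ← ih, mseq_snd_eq]
    rfl

end Main

section Conv

variable {κ : ℝ} {l₀ : ℕ}

lemma key_small (hκ : 0 < κ) (hbase : κ < 1 - 1 / (l₀ : ℝ)) (hl₀ : 2 ≤ l₀)
    {ε : ℝ} (hε : 0 < ε) : ∃ N, (mseq κ l₀ N).2 < κ + ε := by
  by_contra hcon
  push_neg at hcon
  set n₀ : ℕ := ⌈(κ + ε) / ε⌉₊ + 2 with hn₀def
  -- Step A: at large steps the chosen value is within `mo` of the lower bound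
  have stepA : ∀ j, n₀ ≤ j →
      (mseq κ l₀ (j + 1)).1 < max (mseq κ l₀ j).1 (j + 2) + mo (j + 2) := by
    intro j hj
    set L : ℕ := max (mseq κ l₀ j).1 (j + 2) with hL
    set k : ℕ := mo (j + 2) with hk
    have hk0 : 0 < k := mo_pos _
    set r : ℤ := (re (j + 2) : ℤ) with hr
    set rr : ℤ := (r - (L : ℤ)) % (k : ℤ) with hrr
    have hrr0 : 0 ≤ rr := Int.emod_nonneg _ (by exact_mod_cast hk0.ne')
    have hrrk : rr < (k : ℤ) := Int.emod_lt_of_pos _ (by exact_mod_cast hk0)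
    set m₀ : ℕ := L + rr.toNat with hm₀
    have htn : ((rr.toNat : ℤ)) = rr := Int.toNat_of_nonneg hrr0
    have hm₀L : L ≤ m₀ := Nat.le_add_right _ _
    have hm₀lt : m₀ < L + k := by
      have : rr.toNat < k := by omega
      omega
    have hdvd : (k : ℤ) ∣ (m₀ : ℤ) - r := by
      have hq := Int.mul_ediv_add_emod (r - (L : ℤ)) (k : ℤ)
      refine ⟨-((r - (L : ℤ)) / (k : ℤ)), ?_⟩
      have h1 : ((m₀ : ℕ) : ℤ) = (L : ℤ) + rr := by
        rw [hm₀]; push_cast [htn]; ring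
      rw [h1]
      linear_combination hq
    have hQ := hcon j
    have hQκ : κ < (mseq κ l₀ j).2 := mseq_inv hκ hbase j
    have hceil : (⌈(κ + ε) / ε⌉₊ : ℕ) < m₀ := by omega
    have hn₀m : (κ + ε) / ε < (m₀ : ℝ) := by
      have h1 : (κ + ε) / ε ≤ (⌈(κ + ε) / ε⌉₊ : ℝ) := Nat.le_ceil _
      have h2 : ((⌈(κ + ε) / ε⌉₊ : ℕ) : ℝ) < (m₀ : ℝ) := by exact_mod_cast hceil
      linarith
    have hm₀pos : (0 : ℝ) < (m₀ : ℝ) := by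
      have : 0 < m₀ := by omega
      exact_mod_cast this
    have hεm : κ + ε < ε * (m₀ : ℝ) := by
      rw [div_lt_iff₀ hε] at hn₀m
      linarith
    have hmem : m₀ ∈ cand κ (mseq κ l₀ j).2 (j + 2) (mseq κ l₀ j).1 := by
      refine ⟨hm₀L, hdvd, ?_⟩
      have hinv : (m₀ : ℝ) * (1 / (m₀ : ℝ)) = 1 := by field_simp
      have hm₀1 : (1 : ℝ) < (m₀ : ℝ) := by nlinarith
      have hfac : 0 < 1 - 1 / (m₀ : ℝ) := by
        have : 1 / (m₀ : ℝ) < 1 := by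
          rw [div_lt_one hm₀pos]; exact hm₀1
        linarith
      nlinarith [hQ, hinv, hε]
    have heq : (mseq κ l₀ (j + 1)).1 = sInf (cand κ (mseq κ l₀ j).2 (j + 2) (mseq κ l₀ j).1) := by
      simp only [mseq, nxt]
    have hle : (mseq κ l₀ (j + 1)).1 ≤ m₀ := by
      rw [heq]; exact Nat.sInf_le hmem
    omega
  -- Step B: linear growth
  have stepB : ∀ j, n₀ ≤ j →
      (mseq κ l₀ j).1 ≤ (mseq κ l₀ n₀).1 + 2 + j + ∑ i ∈ range (j + 2), mo i := by
    intro j hj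
    induction j, hj using Nat.le_induction with
    | base => omega
    | succ j hj ih =>
      have hA := stepA j hj
      have hsum : ∑ i ∈ range (j + 1 + 2), mo i = (∑ i ∈ range (j + 2), mo i) + mo (j + 2) := by
        have he : j + 1 + 2 = (j + 2) + 1 := by omega
        rw [he, Finset.sum_range_succ]
      have h2 : max (mseq κ l₀ j).1 (j + 2)
          ≤ (mseq κ l₀ n₀).1 + 2 + j + ∑ i ∈ range (j + 2), mo i := by omega
      omega
  set D : ℕ := (mseq κ l₀ n₀).1 + 20 with hD
  have hlin : ∀ j, n₀ ≤ j → (mseq κ l₀ j).1 ≤ D + 10 * j := by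
    intro j hj
    have h1 := stepB j hj
    have h2 := sum_mo_le (j + 2)
    omega
  -- Step C: product factorization beyond n₀
  have stepC : ∀ j, n₀ ≤ j → (mseq κ l₀ j).2 =
      (mseq κ l₀ n₀).2 * ∏ i ∈ Icc (n₀ + 1) j, (1 - 1 / ((mseq κ l₀ i).1 : ℝ)) := by
    intro j hj
    induction j, hj using Nat.le_induction with
    | base => rw [Finset.Icc_eq_empty (by omega), Finset.prod_empty, mul_one]
    | succ j hj ih =>
      rw [mseq_snd_eq, ih, Finset.prod_Icc_succ_top (by omega : n₀ + 1 ≤ j + 1), mul_assoc]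
  -- Step D: factor bounds
  have hfac_le : ∀ i, n₀ ≤ i →
      (1 - 1 / ((mseq κ l₀ i).1 : ℝ)) ≤ Real.exp (-(1 / ((D : ℝ) + 10 * (i : ℝ)))) := by
    intro i hi
    have hui : (mseq κ l₀ i).1 ≤ D + 10 * i := hlin i hi
    have hui2 : 2 ≤ (mseq κ l₀ i).1 := mseq_fst_two hκ hbase hl₀ i
    have h1 : (0 : ℝ) < ((mseq κ l₀ i).1 : ℝ) := by
      have : 0 < (mseq κ l₀ i).1 := by omega
      exact_mod_cast this
    have h2 : (0 : ℝ) < (D : ℝ) + 10 * (i : ℝ) := by positivity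
    have h3 : ((mseq κ l₀ i).1 : ℝ) ≤ (D : ℝ) + 10 * (i : ℝ) := by exact_mod_cast hui
    have h4 : 1 / ((D : ℝ) + 10 * (i : ℝ)) ≤ 1 / ((mseq κ l₀ i).1 : ℝ) :=
      one_div_le_one_div_of_le h1 h3
    have h5 := Real.add_one_le_exp (-(1 / ((D : ℝ) + 10 * (i : ℝ))))
    linarith
  -- harmonic sums
  set H : ℕ → ℝ := fun m => ∑ i ∈ range m, (1 / ((i : ℝ) + 1)) with hHdef
  have hsum_ge : ∀ j, n₀ ≤ j → (1 / ((D : ℝ) + 10)) * (H (j + 1) - H (n₀ + 1))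
      ≤ ∑ i ∈ Icc (n₀ + 1) j, 1 / ((D : ℝ) + 10 * (i : ℝ)) := by
    intro j hj
    have h1 : H (j + 1) - H (n₀ + 1) = ∑ i ∈ Ico (n₀ + 1) (j + 1), (1 / ((i : ℝ) + 1)) := by
      rw [hHdef]
      exact (Finset.sum_Ico_eq_sub _ (by omega)).symm
    rw [h1, ← Finset.Ico_add_one_right_eq_Icc, Finset.mul_sum]
    apply Finset.sum_le_sum
    intro i _
    have hD10 : (0 : ℝ) < (D : ℝ) + 10 := by positivity
    have h2 : (0 : ℝ) < (D : ℝ) + 10 * (i : ℝ) := by positivity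
    rw [div_mul_div_comm, one_mul]
    apply one_div_le_one_div_of_le h2
    nlinarith [Nat.cast_nonneg (α := ℝ) D, Nat.cast_nonneg (α := ℝ) i]
  -- Step E: the global bound
  have hQbound : ∀ j, n₀ ≤ j → (mseq κ l₀ j).2 ≤ (mseq κ l₀ n₀).2 *
      Real.exp (-((1 / ((D : ℝ) + 10)) * (H (j + 1) - H (n₀ + 1)))) := by
    intro j hj
    have hQn₀pos : 0 < (mseq κ l₀ n₀).2 := hκ.trans (mseq_inv hκ hbase n₀)
    rw [stepC j hj]
    apply mul_le_mul_of_nonneg_left _ hQn₀pos.le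
    calc ∏ i ∈ Icc (n₀ + 1) j, (1 - 1 / ((mseq κ l₀ i).1 : ℝ))
        ≤ ∏ i ∈ Icc (n₀ + 1) j, Real.exp (-(1 / ((D : ℝ) + 10 * (i : ℝ)))) := by
          apply Finset.prod_le_prod
          · intro i _
            exact (factor_pos (mseq_fst_two hκ hbase hl₀ i)).le
          · intro i hi
            have : n₀ ≤ i := by
              have := (Finset.mem_Icc.1 hi).1; omega
            exact hfac_le i this
      _ = Real.exp (∑ i ∈ Icc (n₀ + 1) j, -(1 / ((D : ℝ) + 10 * (i : ℝ)))) :=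
          (Real.exp_sum _ _).symm
      _ ≤ Real.exp (-((1 / ((D : ℝ) + 10)) * (H (j + 1) - H (n₀ + 1)))) := by
          rw [Real.exp_le_exp, Finset.sum_neg_distrib, neg_le_neg_iff]
          exact hsum_ge j hj
  -- Step F: contradiction via divergence of the harmonic series
  have hHt : Tendsto H atTop atTop := Real.tendsto_sum_range_one_div_nat_succ_atTop
  have h1 : Tendsto (fun j : ℕ => H (j + 1)) atTop atTop := hHt.comp (tendsto_add_atTop_nat 1)
  have h2 : Tendsto (fun j : ℕ => H (j + 1) - H (n₀ + 1)) atTop atTop := by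
    simpa [sub_eq_add_neg] using tendsto_atTop_add_const_right atTop (-(H (n₀ + 1))) h1
  have h3 : Tendsto (fun j : ℕ => (1 / ((D : ℝ) + 10)) * (H (j + 1) - H (n₀ + 1)))
      atTop atTop := h2.const_mul_atTop (by positivity)
  have h4 : Tendsto (fun j : ℕ =>
      Real.exp (-((1 / ((D : ℝ) + 10)) * (H (j + 1) - H (n₀ + 1))))) atTop (nhds 0) :=
    Real.tendsto_exp_atBot.comp (tendsto_neg_atTop_atBot.comp h3)
  have h5 : Tendsto (fun j : ℕ => (mseq κ l₀ n₀).2 *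
      Real.exp (-((1 / ((D : ℝ) + 10)) * (H (j + 1) - H (n₀ + 1))))) atTop (nhds 0) := by
    simpa using h4.const_mul ((mseq κ l₀ n₀).2)
  have h6 : ∀ᶠ j : ℕ in atTop, (mseq κ l₀ n₀).2 *
      Real.exp (-((1 / ((D : ℝ) + 10)) * (H (j + 1) - H (n₀ + 1)))) < κ + ε :=
    h5.eventually (gt_mem_nhds (by positivity))
  obtain ⟨j, hj1, hj2⟩ := (h6.and (eventually_ge_atTop n₀)).exists
  have h7 := hcon j
  have h8 := hQbound j hj2
  linarith

lemma mseq_tendsto (hκ : 0 < κ) (hbase : κ < 1 - 1 / (l₀ : ℝ)) (hl₀ : 2 ≤ l₀) :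
    Tendsto (fun j => (mseq κ l₀ j).2) atTop (nhds κ) := by
  rw [Metric.tendsto_atTop]
  intro ε hε
  obtain ⟨N, hN⟩ := key_small hκ hbase hl₀ hε
  refine ⟨N, fun n hn => ?_⟩
  have h1 : κ < (mseq κ l₀ n).2 := mseq_inv hκ hbase n
  have h2 : (mseq κ l₀ n).2 ≤ (mseq κ l₀ N).2 := mseq_snd_anti hκ hbase hn
  rw [Real.dist_eq, abs_of_pos (by linarith)]
  linarith

end Conv


/-- for `κ ∈ (0,1)` and a positive integer `l₀` with `1 − 1/l₀ > κ`,
there is a sequence of positive integers `l(n)` (indexed by `n ≥ 1`) which is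
nondecreasing, bounded below by `l₀`, starts at `l(1) = l₀`, tends to infinity,
realizes `∏_{n=1}^∞ (1 − 1/l(n)) = κ`, and such that every positive integer `k`
divides some `l(n₁)` and some `l(n₂) − 2`. -/
theorem stmt_15 (κ : ℝ) (hκ : κ ∈ Set.Ioo (0 : ℝ) 1)
    (l₀ : ℕ) (hl₀ : 0 < l₀) (h : 1 - 1 / (l₀ : ℝ) > κ) :
    ∃ l : ℕ → ℕ, (∀ n, 1 ≤ n → 0 < l n) ∧
      Tendsto (fun N => ∏ k ∈ Finset.Icc 1 N, (1 - 1 / (l k : ℝ))) atTop (nhds κ) ∧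
      (∀ n m, 1 ≤ n → n ≤ m → l n ≤ l m) ∧
      (∀ n, 1 ≤ n → l₀ ≤ l n) ∧
      l 1 = l₀ ∧
      Tendsto (fun n => l n) atTop atTop ∧
      (∀ k : ℕ, 0 < k → ∃ n₁ n₂ : ℕ, 1 ≤ n₁ ∧ 1 ≤ n₂ ∧
        (k : ℤ) ∣ (l n₁ : ℤ) ∧ (k : ℤ) ∣ ((l n₂ : ℤ) - 2)) := by
  obtain ⟨hκ0, hκ1⟩ := hκ
  have hbase : κ < 1 - 1 / (l₀ : ℝ) := h
  have hl₀2 : 2 ≤ l₀ := by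
    by_contra hc
    have h1 : l₀ = 1 := by omega
    rw [h1] at hbase
    norm_num at hbase
    linarith
  refine ⟨fun n => (mseq κ l₀ (n - 1)).1, ?_, ?_, ?_, ?_, ?_, ?_, ?_⟩
  · -- positivity
    intro n _
    have h2 := mseq_fst_two hκ0 hbase hl₀2 (n - 1)
    show 0 < (mseq κ l₀ (n - 1)).1
    omega
  · -- tendsto of the partial products
    have hQ : Tendsto (fun j => (mseq κ l₀ j).2) atTop (nhds κ) :=
      mseq_tendsto hκ0 hbase hl₀2
    have hcomp : Tendsto (fun N : ℕ => (mseq κ l₀ (N - 1)).2) atTop (nhds κ) :=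
      hQ.comp (tendsto_sub_atTop_nat 1)
    apply hcomp.congr'
    filter_upwards [eventually_ge_atTop 1] with N hN
    have he : N - 1 + 1 = N := by omega
    rw [mseq_prod, he]
  · -- monotone
    intro n m hn hnm
    exact mseq_fst_mono hκ0 hbase (by omega : n - 1 ≤ m - 1)
  · -- bounded below by l₀
    intro n hn
    have h1 : (mseq κ l₀ 0).1 ≤ (mseq κ l₀ (n - 1)).1 :=
      mseq_fst_mono hκ0 hbase (Nat.zero_le _)
    simpa only [mseq] using h1
  · -- l 1 = l₀
    simp only [Nat.sub_self, mseq]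
  · -- tendsto atTop
    apply tendsto_atTop_mono _ tendsto_id
    intro n
    rcases Nat.eq_zero_or_pos n with rfl | hn
    · exact Nat.zero_le _
    · have := mseq_fst_idx hκ0 hbase hl₀2 (n - 1)
      simp only [id_eq]
      omega
  · -- divisibility requirements
    intro k hk
    have hk1 : 1 ≤ k := hk
    refine ⟨4 ^ k, 2 * 4 ^ k, ?_, ?_, ?_, ?_⟩
    · have : 0 < 4 ^ k := by positivity
      omega
    · have : 0 < 2 * 4 ^ k := by positivity
      omega
    · -- k ∣ l (4^k)
      have h4 : 4 ≤ 4 ^ k := by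
        calc 4 = 4 ^ 1 := by norm_num
        _ ≤ 4 ^ k := Nat.pow_le_pow_right (by norm_num) hk1
      obtain ⟨hmo, hre⟩ := mo_pow4 hk1
      have hmem := mseq_mem hκ0 hbase (4 ^ k - 2)
      have he : 4 ^ k - 2 + 2 = 4 ^ k := by omega
      have he1 : 4 ^ k - 2 + 1 = 4 ^ k - 1 := by omega
      rw [he, he1] at hmem
      have hd := hmem.2.1
      rw [hmo, hre] at hd
      simpa using hd
    · -- k ∣ l (2·4^k) - 2
      have h4 : 4 ≤ 2 * 4 ^ k := by
        have : 4 ≤ 4 ^ k := by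
          calc 4 = 4 ^ 1 := by norm_num
          _ ≤ 4 ^ k := Nat.pow_le_pow_right (by norm_num) hk1
        omega
      obtain ⟨hmo, hre⟩ := mo_two_mul_pow4 hk1
      have hmem := mseq_mem hκ0 hbase (2 * 4 ^ k - 2)
      have he : 2 * 4 ^ k - 2 + 2 = 2 * 4 ^ k := by omega
      have he1 : 2 * 4 ^ k - 2 + 1 = 2 * 4 ^ k - 1 := by omega
      rw [he, he1] at hmem
      have hd := hmem.2.1
      rw [hmo, hre] at hd
      simpa using hd
end

section
/- Let l : ℤ_{>0} → ℤ_{>0} be a sequence of positive integers such that the limit κ₀ = lim_{N→∞} ∏_{n=1}^{N} (1 − 1/l(n)) is strictly positive. Then for every real number κ with 0 ≤ κ ≤ κ₀ there exists a sequence d : ℤ_{>0} → ℤ_{>0} such that 1 ≤ d(n) ≤ l(n) − 1 for all n and the partial products ∏_{n=1}^{N} d(n)/l(n) converge to κ as N → ∞. -/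
open Filter

/-- Greedy choice of the next digit. -/
noncomputable def aD (l : ℕ → ℕ) (A : ℕ → ℝ) (n : ℕ) (P : ℝ) : ℕ :=
  min (l (n + 1) - 1) (max 1 ⌈A (n + 1) * (l (n + 1) : ℝ) / P⌉₊)

/-- Partial products of the greedy construction. -/
noncomputable def aP (l : ℕ → ℕ) (A : ℕ → ℝ) : ℕ → ℝ
  | 0 => 1
  | n + 1 => aP l A n * (aD l A n (aP l A n) : ℝ) / (l (n + 1) : ℝ)

lemma aP_facts (l : ℕ → ℕ) (A : ℕ → ℝ)
    (hl2 : ∀ k, 1 ≤ k → 2 ≤ l k)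
    (hA0 : ∀ n, 0 ≤ A n) (hA01 : A 0 ≤ 1)
    (hAstep : ∀ n, A (n + 1) = A n * (1 - 1 / (l (n + 1) : ℝ))) :
    ∀ n, 0 < aP l A n ∧ aP l A n ≤ 1 ∧ A n ≤ aP l A n := by
  intro n
  induction n with
  | zero => exact ⟨one_pos, le_refl 1, by simpa [aP] using hA01⟩
  | succ n ih =>
    obtain ⟨hP0, hP1, hPA⟩ := ih
    have hln : 2 ≤ l (n + 1) := hl2 (n + 1) (by omega)
    have hL : (2 : ℝ) ≤ (l (n + 1) : ℝ) := by exact_mod_cast hln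
    have hL0 : (0 : ℝ) < (l (n + 1) : ℝ) := by linarith
    set P := aP l A n with hP
    set x := A (n + 1) * (l (n + 1) : ℝ) / P with hx
    have hDdef : aD l A n P = min (l (n + 1) - 1) (max 1 ⌈x⌉₊) := rfl
    have hD1 : 1 ≤ aD l A n P := by
      rw [hDdef]; exact le_min (by omega) (le_max_left _ _)
    have hD1R : (1 : ℝ) ≤ (aD l A n P : ℝ) := by exact_mod_cast hD1
    have hDle : aD l A n P ≤ l (n + 1) - 1 := by rw [hDdef]; exact min_le_left _ _
    have hcast : ((l (n + 1) - 1 : ℕ) : ℝ) = (l (n + 1) : ℝ) - 1 := by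
      have : 1 ≤ l (n + 1) := by omega
      push_cast [Nat.cast_sub this]; ring
    have hDleR : (aD l A n P : ℝ) ≤ (l (n + 1) : ℝ) - 1 := by
      rw [← hcast]; exact_mod_cast hDle
    have hsucc : aP l A (n + 1) = P * (aD l A n P : ℝ) / (l (n + 1) : ℝ) := by
      simp [aP, hP]
    refine ⟨?_, ?_, ?_⟩
    · rw [hsucc]
      apply div_pos (mul_pos hP0 (by linarith)) hL0
    · rw [hsucc, div_le_one hL0]
      nlinarith
    · rw [hsucc, hAstep n]
      rcases le_or_gt (l (n + 1) - 1) (max 1 ⌈x⌉₊) with hc | hc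
      · have hDeq : aD l A n P = l (n + 1) - 1 := by rw [hDdef]; exact min_eq_left hc
        rw [hDeq, hcast]
        have h1 : (0 : ℝ) ≤ 1 - 1 / (l (n + 1) : ℝ) := by
          rw [sub_nonneg, div_le_one hL0]; linarith
        have heq : P * ((l (n + 1) : ℝ) - 1) / (l (n + 1) : ℝ)
            = P * (1 - 1 / (l (n + 1) : ℝ)) := by
          field_simp
        rw [heq]
        exact mul_le_mul_of_nonneg_right hPA h1
      · have hDeq : aD l A n P = max 1 ⌈x⌉₊ := by rw [hDdef]; exact min_eq_right hc.le
        have hxle : x ≤ (aD l A n P : ℝ) := by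
          rw [hDeq]
          calc x ≤ (⌈x⌉₊ : ℝ) := Nat.le_ceil x
            _ ≤ ((max 1 ⌈x⌉₊ : ℕ) : ℝ) := by exact_mod_cast le_max_right 1 ⌈x⌉₊
        have hAx : A n * (1 - 1 / (l (n + 1) : ℝ)) = P * x / (l (n + 1) : ℝ) := by
          rw [hx, ← hAstep n]
          field_simp
        rw [hAx]
        gcongr

lemma aP_upper (l : ℕ → ℕ) (A : ℕ → ℝ)
    (hl2 : ∀ k, 1 ≤ k → 2 ≤ l k)
    (hA0 : ∀ n, 0 ≤ A n) (hA01 : A 0 ≤ 1)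
    (hAstep : ∀ n, A (n + 1) = A n * (1 - 1 / (l (n + 1) : ℝ))) :
    ∀ n, aP l A (n + 1) ≤ A (n + 1) + 1 / (l (n + 1) : ℝ) := by
  intro n
  obtain ⟨hP0, hP1, hPA⟩ := aP_facts l A hl2 hA0 hA01 hAstep n
  have hln : 2 ≤ l (n + 1) := hl2 (n + 1) (by omega)
  have hL : (2 : ℝ) ≤ (l (n + 1) : ℝ) := by exact_mod_cast hln
  have hL0 : (0 : ℝ) < (l (n + 1) : ℝ) := by linarith
  set P := aP l A n with hP
  set x := A (n + 1) * (l (n + 1) : ℝ) / P with hx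
  have hDdef : aD l A n P = min (l (n + 1) - 1) (max 1 ⌈x⌉₊) := rfl
  have hD1 : 1 ≤ aD l A n P := by
    rw [hDdef]; exact le_min (by omega) (le_max_left _ _)
  have hsucc : aP l A (n + 1) = P * (aD l A n P : ℝ) / (l (n + 1) : ℝ) := by
    simp [aP, hP]
  have hPL : P / (l (n + 1) : ℝ) ≤ 1 / (l (n + 1) : ℝ) := by gcongr
  rcases Nat.lt_or_ge (aD l A n P) 2 with hd | hd
  · have hDeq : aD l A n P = 1 := by omega
    rw [hsucc, hDeq]
    push_cast
    have h1 : P * 1 / (l (n + 1) : ℝ) = P / (l (n + 1) : ℝ) := by ring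
    rw [h1]
    have := hA0 (n + 1)
    linarith
  · have hceil : aD l A n P ≤ ⌈x⌉₊ := by
      have h := min_le_right (l (n + 1) - 1) (max 1 ⌈x⌉₊)
      rw [← hDdef] at h
      rcases le_or_gt ⌈x⌉₊ 1 with h1 | h1
      · omega
      · omega
    have hx0 : 0 ≤ x := div_nonneg (mul_nonneg (hA0 (n + 1)) hL0.le) hP0.le
    have hDlt : (aD l A n P : ℝ) < x + 1 := by
      calc (aD l A n P : ℝ) ≤ (⌈x⌉₊ : ℝ) := by exact_mod_cast hceil
        _ < x + 1 := Nat.ceil_lt_add_one hx0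
    rw [hsucc]
    have key : P * (aD l A n P : ℝ) / (l (n + 1) : ℝ) ≤ P * (x + 1) / (l (n + 1) : ℝ) := by
      gcongr
    have heq : P * (x + 1) / (l (n + 1) : ℝ) = A (n + 1) + P / (l (n + 1) : ℝ) := by
      rw [hx]
      field_simp
    rw [heq] at key
    linarith

/-- if `l(n)` are positive integers with
`κ₀ = lim_N ∏_{n=1}^N (1 − 1/l(n)) > 0`, then for every `κ ∈ [0, κ₀]` there is a
sequence `d(n)` of positive integers with `1 ≤ d(n) ≤ l(n) − 1` for all `n` and
`∏_{n=1}^∞ d(n)/l(n) = κ`. -/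
theorem stmt_17 (l : ℕ → ℕ) (hl : ∀ n, 1 ≤ n → 0 < l n) (κ₀ : ℝ)
    (hκ₀ : Tendsto (fun N => ∏ k ∈ Finset.Icc 1 N, (1 - 1 / (l k : ℝ))) atTop (nhds κ₀))
    (hpos : 0 < κ₀)
    (κ : ℝ) (hκ0 : 0 ≤ κ) (hκκ₀ : κ ≤ κ₀) :
    ∃ d : ℕ → ℕ, (∀ n, 1 ≤ n → 1 ≤ d n ∧ d n ≤ l n - 1) ∧
      Tendsto (fun N => ∏ k ∈ Finset.Icc 1 N, ((d k : ℝ) / (l k : ℝ))) atTop (nhds κ) := by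
  set Q : ℕ → ℝ := fun N => ∏ k ∈ Finset.Icc 1 N, (1 - 1 / (l k : ℝ)) with hQdef
  -- every l k with k ≥ 1 is at least 2
  have hl2 : ∀ k, 1 ≤ k → 2 ≤ l k := by
    intro k hk
    by_contra h
    have hlk : l k = 1 := by have := hl k hk; omega
    have hzero : ∀ N, k ≤ N → Q N = 0 := by
      intro N hN
      apply Finset.prod_eq_zero (Finset.mem_Icc.mpr ⟨hk, hN⟩)
      rw [hlk]; norm_num
    have hz : Tendsto Q atTop (nhds 0) := by
      apply Tendsto.congr' _ tendsto_const_nhds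
      filter_upwards [eventually_ge_atTop k] with N hN
      exact (hzero N hN).symm
    have := tendsto_nhds_unique hκ₀ hz
    linarith
  have hQ0 : Q 0 = 1 := by
    simp [hQdef]
  have hQstep : ∀ N, Q (N + 1) = Q N * (1 - 1 / (l (N + 1) : ℝ)) := by
    intro N
    exact Finset.prod_Icc_succ_top (by omega) _
  have hfac : ∀ k, 1 ≤ k → 0 < 1 - 1 / (l k : ℝ) := by
    intro k hk
    have h2 : (2 : ℝ) ≤ (l k : ℝ) := by exact_mod_cast hl2 k hk
    have : 1 / (l k : ℝ) < 1 := by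
      rw [div_lt_one (by linarith)]; linarith
    linarith
  have hfacle : ∀ k, 1 ≤ k → 1 - 1 / (l k : ℝ) ≤ 1 := by
    intro k hk
    have h2 : (2 : ℝ) ≤ (l k : ℝ) := by exact_mod_cast hl2 k hk
    have : 0 ≤ 1 / (l k : ℝ) := by positivity
    linarith
  have hQpos : ∀ N, 0 < Q N := by
    intro N
    apply Finset.prod_pos
    intro k hk
    exact hfac k (Finset.mem_Icc.mp hk).1
  -- the target sequence A
  set A : ℕ → ℝ := fun n => κ / κ₀ * Q n with hAdef
  have hA0 : ∀ n, 0 ≤ A n :=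
    fun n => mul_nonneg (div_nonneg hκ0 hpos.le) (hQpos n).le
  have hA01 : A 0 ≤ 1 := by
    rw [hAdef]
    simp only [hQ0, mul_one]
    rw [div_le_one hpos]
    exact hκκ₀
  have hAstep : ∀ n, A (n + 1) = A n * (1 - 1 / (l (n + 1) : ℝ)) := by
    intro n
    simp only [hAdef]
    rw [hQstep n]
    ring
  have hAlim : Tendsto A atTop (nhds κ) := by
    have h := hκ₀.const_mul (κ / κ₀)
    have : κ / κ₀ * κ₀ = κ := div_mul_cancel₀ κ hpos.ne'
    rwa [this] at h
  -- 1 / l N → 0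
  have hLlim : Tendsto (fun N => 1 / (l N : ℝ)) atTop (nhds 0) := by
    have h1 : Tendsto (fun N => Q (N + 1) / Q N) atTop (nhds (κ₀ / κ₀)) :=
      (hκ₀.comp (tendsto_add_atTop_nat 1)).div hκ₀ hpos.ne'
    rw [div_self hpos.ne'] at h1
    have h2 : (fun N => Q (N + 1) / Q N) = fun N => 1 - 1 / (l (N + 1) : ℝ) := by
      funext N
      rw [hQstep N]
      exact mul_div_cancel_left₀ _ (hQpos N).ne'
    rw [h2] at h1
    have h3 : Tendsto (fun N => 1 / (l (N + 1) : ℝ)) atTop (nhds 0) := by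
      have h4 : Tendsto (fun N : ℕ => 1 - (1 - 1 / (l (N + 1) : ℝ))) atTop
          (nhds (1 - 1)) := tendsto_const_nhds.sub h1
      simp only [sub_sub_cancel, sub_self] at h4
      exact h4
    exact (tendsto_add_atTop_iff_nat 1).mp h3
  obtain ⟨hinvP, hinvU⟩ : (∀ n, 0 < aP l A n ∧ aP l A n ≤ 1 ∧ A n ≤ aP l A n) ∧
      (∀ n, aP l A (n + 1) ≤ A (n + 1) + 1 / (l (n + 1) : ℝ)) :=
    ⟨aP_facts l A hl2 hA0 hA01 hAstep, aP_upper l A hl2 hA0 hA01 hAstep⟩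
  refine ⟨fun n => if n = 0 then 1 else aD l A (n - 1) (aP l A (n - 1)), ?_, ?_⟩
  · intro n hn
    obtain ⟨m, rfl⟩ := Nat.exists_eq_succ_of_ne_zero (by omega : n ≠ 0)
    have hln : 2 ≤ l (m + 1) := hl2 (m + 1) (by omega)
    simp only [Nat.succ_ne_zero, if_false, Nat.succ_sub_one]
    constructor
    · exact le_min (by omega) (le_max_left _ _)
    · exact min_le_left _ _
  · have hprod : ∀ N, ∏ k ∈ Finset.Icc 1 N,
        (((if k = 0 then 1 else aD l A (k - 1) (aP l A (k - 1))) : ℕ) : ℝ) / (l k : ℝ)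
        = aP l A N := by
      intro N
      induction N with
      | zero => simp [aP]
      | succ N ih =>
        rw [Finset.prod_Icc_succ_top (by omega : 1 ≤ N + 1), ih]
        simp only [Nat.succ_ne_zero, if_false, Nat.succ_sub_one]
        simp [aP, mul_div_assoc]
    have hgoal : Tendsto (fun N => aP l A N) atTop (nhds κ) := by
      apply tendsto_of_tendsto_of_tendsto_of_le_of_le' hAlim
        (by simpa using hAlim.add hLlim :
          Tendsto (fun N => A N + 1 / (l N : ℝ)) atTop (nhds κ))
      · filter_upwards with N
        exact (hinvP N).2.2
      · filter_upwards [eventually_ge_atTop 1] with N hN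
        obtain ⟨m, rfl⟩ := Nat.exists_eq_succ_of_ne_zero (by omega : N ≠ 0)
        exact hinvU m
    apply hgoal.congr
    intro N
    exact (hprod N).symm
end
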